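/- arXiv:2312.01076 — 11 statements merged into one kernel-verified Lean document; each statement's English description precedes it below -/
import Mathlib

section
/- For every real number x, |cos(πx)| ≤ 1 − π·‖x‖², where ‖x‖ denotes the distance from x to the nearest integer. -/
/-- Distance from a real number to the nearest integer. -/
noncomputable def nearestIntDist (y : ℝ) : ℝ := |y - round y|

theorem cos_abs_le_one_sub_pi_nearestIntDist_sq (x : ℝ) :
    |Real.cos (Real.pi * x)| ≤ 1 - Real.pi * (nearestIntDist x) ^ 2 := by
  have hpi := Real.pi_gt_d6
  have hpi' := Real.pi_lt_d2
  set t : ℝ := x - round x with ht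
  have habs : |t| ≤ 1/2 := abs_sub_round x
  have hx : Real.pi * x = Real.pi * t + (round x : ℤ) * Real.pi := by
    push_cast; ring
  have hcoseq : |Real.cos (Real.pi * x)| = |Real.cos (Real.pi * t)| := by
    rw [hx, Real.cos_add_int_mul_pi, abs_mul]
    have hone : |((-1:ℝ)) ^ round x| = 1 := by
      rcases Int.even_or_odd (round x) with h | h
      · rw [h.neg_one_zpow]; norm_num
      · rw [Odd.neg_one_zpow h]; norm_num
    rw [hone, one_mul]
  have hdist : nearestIntDist x ^ 2 = t ^ 2 := by
    rw [nearestIntDist, ← ht, sq_abs]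
  rw [hcoseq, hdist]
  set a : ℝ := |t| with ha
  have ha0 : 0 ≤ a := abs_nonneg t
  have hta : t ^ 2 = a ^ 2 := (sq_abs t).symm
  have ha2 : a ^ 2 ≤ 1/4 := by nlinarith
  have hcc : Real.cos (Real.pi * t) = Real.cos (Real.pi * a) := by
    rcases abs_cases t with ⟨h, _⟩ | ⟨h, _⟩
    · rw [ha, h]
    · rw [ha, h, mul_neg, Real.cos_neg]
  have hnn : 0 ≤ Real.cos (Real.pi * t) := by
    apply Real.cos_nonneg_of_mem_Icc
    constructor
    · nlinarith [neg_abs_le t]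
    · nlinarith [le_abs_self t]
  rw [abs_of_nonneg hnn, hcc, hta]
  rcases eq_or_lt_of_le ha0 with h0 | h0
  · rw [← h0, mul_zero, Real.cos_zero]
    nlinarith
  · set u : ℝ := Real.pi * a / 2 with hu
    have hu0 : 0 < u := by positivity
    have hu1 : u ≤ 1 := by nlinarith
    have hsin : u - u ^ 3 / 4 < Real.sin u := by
      have := Real.sin_gt_sub_cube hu0
      nlinarith [pow_pos hu0 3]
    have hcos2 : Real.cos (Real.pi * a) = 1 - 2 * Real.sin u ^ 2 := by
      have h2u : Real.pi * a = 2 * u := by rw [hu]; ring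
      rw [h2u, Real.cos_two_mul', Real.sin_sq]; ring
    rw [hcos2]
    have hueq : u - u^3/4 = (Real.pi*a/2) * (1 - Real.pi^2*a^2/16) := by
      rw [hu]; ring
    have h1 : Real.pi^2*a^2/16 ≤ 1/6 := by nlinarith
    have hfac : 1 ≤ Real.pi/2 * (1 - Real.pi^2*a^2/16)^2 := by
      have h3 : (5/6:ℝ) ≤ 1 - Real.pi^2*a^2/16 := by linarith
      nlinarith [sq_nonneg (1 - Real.pi^2*a^2/16 - 5/6)]
    have hpos : 0 ≤ u - u^3/4 := by
      rw [hueq]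
      have : 0 ≤ 1 - Real.pi^2*a^2/16 := by linarith
      positivity
    have hkey : Real.pi * a^2 ≤ 2 * (u - u^3/4)^2 := by
      rw [hueq]
      have hmul := mul_le_mul_of_nonneg_left hfac
        (show (0:ℝ) ≤ Real.pi * a^2 by positivity)
      calc Real.pi * a^2 = Real.pi * a^2 * 1 := by ring
        _ ≤ Real.pi * a^2 * (Real.pi/2 * (1 - Real.pi^2*a^2/16)^2) := hmul
        _ = 2 * ((Real.pi*a/2) * (1 - Real.pi^2*a^2/16))^2 := by ring
    have hsq : (u - u^3/4)^2 ≤ Real.sin u ^ 2 := pow_le_pow_left₀ hpos hsin.le 2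
    linarith [hkey, hsq]
end

section
/- For any integer k, nonnegative integer r, and real γ, |∑_{j ∈ D_b(r)} e(kjγ)| ≤ 2^{r+1} · ∏_{d=0}^{r} (1 − π·‖k·b^d·γ‖²). -/
/-- `e(x) = exp(2πix)`. -/
noncomputable def eexp (x : ℝ) : ℂ := Complex.exp (2 * Real.pi * Complex.I * x)

lemma cos_pi_mul_le {x : ℝ} (h0 : 0 ≤ x) (h1 : x ≤ 1/2) :
    Real.cos (Real.pi * x) ≤ 1 - Real.pi * x ^ 2 := by
  rcases eq_or_lt_of_le h0 with h | h
  · simp [← h]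
  · set u := Real.pi * x / 2 with hu
    have hpi1 : Real.pi < 3.15 := Real.pi_lt_d2
    have hpi2 : 3.14 < Real.pi := by linarith [Real.pi_gt_d6]
    have hu0 : 0 < u := by positivity
    have hu1 : u ≤ 1 := by rw [hu]; nlinarith
    have hu2 : u ^ 2 ≤ 1 := by nlinarith
    have hs : u - u ^ 3 / 4 < Real.sin u := by
      have := Real.sin_gt_sub_cube hu0; nlinarith [pow_pos hu0 3]
    have hsl : 0 < u - u ^ 3 / 4 := by nlinarith [mul_nonneg hu0.le (by linarith : (0:ℝ) ≤ 1 - u ^ 2)]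
    have hcos : Real.cos (Real.pi * x) = 1 - 2 * Real.sin u ^ 2 := by
      have h2u : Real.pi * x = 2 * u := by rw [hu]; ring
      rw [h2u, Real.cos_two_mul, ← Real.sin_sq_add_cos_sq u]; ring
    rw [hcos]
    have hsq : (u - u ^ 3 / 4) ^ 2 < Real.sin u ^ 2 := by nlinarith
    have hub : u ^ 2 ≤ (3.15 : ℝ) ^ 2 / 16 := by
      have : u ≤ 3.15 / 4 := by rw [hu]; nlinarith
      nlinarith
    have h2 : ((0.84 : ℝ)) ^ 2 ≤ (1 - u ^ 2 / 4) ^ 2 := by nlinarith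
    have key : Real.pi * x ^ 2 ≤ 2 * (u - u ^ 3 / 4) ^ 2 := by
      have hrw : 2 * (u - u ^ 3 / 4) ^ 2 = (Real.pi ^ 2 * x ^ 2 / 2) * (1 - u ^ 2 / 4) ^ 2 := by
        rw [hu]; ring
      rw [hrw]
      have hp : Real.pi ≤ Real.pi ^ 2 / 2 * (0.84 : ℝ) ^ 2 := by nlinarith
      calc Real.pi * x ^ 2 ≤ (Real.pi ^ 2 / 2 * (0.84 : ℝ) ^ 2) * x ^ 2 :=
            mul_le_mul_of_nonneg_right hp (sq_nonneg x)
        _ ≤ (Real.pi ^ 2 * x ^ 2 / 2) * (1 - u ^ 2 / 4) ^ 2 := by nlinarith [sq_nonneg x, mul_le_mul_of_nonneg_left h2 (by positivity : (0:ℝ) ≤ Real.pi ^ 2 * x ^ 2 / 2)]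
    linarith

lemma eexp_add (x y : ℝ) : eexp (x + y) = eexp x * eexp y := by
  unfold eexp
  rw [← Complex.exp_add]
  congr 1
  push_cast
  ring

lemma eexp_sum (s : Finset ℕ) (f : ℕ → ℝ) :
    eexp (∑ i ∈ s, f i) = ∏ i ∈ s, eexp (f i) := by
  classical
  induction s using Finset.cons_induction with
  | empty => simp [eexp]
  | cons a s ha ih => rw [Finset.sum_cons, eexp_add, ih, Finset.prod_cons]

lemma abs_one_add_eexp (θ : ℝ) :
    ‖1 + eexp θ‖ = 2 * |Real.cos (Real.pi * θ)| := by
  have key : 1 + eexp θ =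
      Complex.exp ((Real.pi * θ : ℝ) * Complex.I) *
        (2 * ((Real.cos (Real.pi * θ) : ℝ) : ℂ)) := by
    rw [Complex.ofReal_cos, Complex.cos, eexp]
    rw [mul_div_assoc', mul_div_cancel_left₀ _ (two_ne_zero), mul_add, ← Complex.exp_add,
      ← Complex.exp_add]
    have e1 : (↑(Real.pi * θ) : ℂ) * Complex.I + ↑(Real.pi * θ) * Complex.I
        = 2 * ↑Real.pi * Complex.I * ↑θ := by push_cast; ring
    have e2 : (↑(Real.pi * θ) : ℂ) * Complex.I + -↑(Real.pi * θ) * Complex.I = 0 := by ring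
    rw [e1, e2, Complex.exp_zero]
    ring
  rw [key, norm_mul, Complex.norm_exp_ofReal_mul_I, one_mul, norm_mul, Complex.norm_two,
    Complex.norm_real, Real.norm_eq_abs]

lemma abs_cos_pi_eq (θ : ℝ) :
    |Real.cos (Real.pi * θ)| = Real.cos (Real.pi * nearestIntDist θ) := by
  have h1 : Real.pi * θ = Real.pi * (θ - round θ) + (round θ : ℤ) * Real.pi := by ring
  rw [h1, Real.cos_add_int_mul_pi, abs_mul]
  have hone : |((-1 : ℝ)) ^ (round θ)| = 1 := by
    rcases Int.even_or_odd (round θ) with he | ho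
    · rw [he.neg_one_zpow]; simp
    · rw [ho.neg_one_zpow]; simp
  rw [hone, one_mul]
  have h2 : Real.pi * nearestIntDist θ = |Real.pi * (θ - round θ)| := by
    rw [nearestIntDist, abs_mul, abs_of_nonneg Real.pi_pos.le]
  rw [h2, Real.cos_abs]
  have hd : |θ - (round θ : ℤ)| ≤ 1/2 := abs_sub_round θ
  have habs : |Real.pi * (θ - round θ)| ≤ Real.pi / 2 := by
    rw [abs_mul, abs_of_nonneg Real.pi_pos.le]
    nlinarith [Real.pi_pos]
  rw [abs_of_nonneg]
  apply Real.cos_nonneg_of_mem_Icc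
  constructor <;> [linarith [neg_abs_le (Real.pi * (θ - round θ))]; linarith [le_abs_self (Real.pi * (θ - round θ))]]

lemma abs_one_add_eexp_le (θ : ℝ) :
    ‖1 + eexp θ‖ ≤ 2 * (1 - Real.pi * (nearestIntDist θ) ^ 2) := by
  rw [abs_one_add_eexp, abs_cos_pi_eq]
  have h0 : 0 ≤ nearestIntDist θ := abs_nonneg _
  have h1 : nearestIntDist θ ≤ 1/2 := abs_sub_round θ
  linarith [cos_pi_mul_le h0 h1]

/-- Summing over `D_b(r)` is the same as summing over subsets `S ⊆ {0,…,r}`,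
with `j = ∑_{i ∈ S} b^i`. -/
theorem exp_sum_digit_bound (b : ℕ) (hb : 2 ≤ b) (k : ℤ) (r : ℕ) (γ : ℝ) :
    ‖(∑ S ∈ (Finset.range (r + 1)).powerset,
        eexp ((k : ℝ) * (∑ i ∈ S, (b : ℝ) ^ i) * γ))‖
      ≤ 2 ^ (r + 1) *
        ∏ d ∈ Finset.range (r + 1),
          (1 - Real.pi * (nearestIntDist ((k : ℝ) * (b : ℝ) ^ d * γ)) ^ 2) := by
  have hfact : (∑ S ∈ (Finset.range (r + 1)).powerset,
      eexp ((k : ℝ) * (∑ i ∈ S, (b : ℝ) ^ i) * γ))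
      = ∏ d ∈ Finset.range (r + 1), (1 + eexp ((k : ℝ) * (b : ℝ) ^ d * γ)) := by
    have h := Finset.prod_add (fun d => eexp ((k : ℝ) * (b : ℝ) ^ d * γ))
      (fun _ => (1 : ℂ)) (Finset.range (r + 1))
    simp only [Finset.prod_const_one, mul_one] at h
    have h2 : (∏ d ∈ Finset.range (r + 1), (1 + eexp ((k : ℝ) * (b : ℝ) ^ d * γ)))
        = ∏ d ∈ Finset.range (r + 1), (eexp ((k : ℝ) * (b : ℝ) ^ d * γ) + 1) := by
      simp [add_comm]
    rw [h2, h]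
    apply Finset.sum_congr rfl
    intro S _
    have harg : (k : ℝ) * (∑ i ∈ S, (b : ℝ) ^ i) * γ
        = ∑ i ∈ S, (k : ℝ) * (b : ℝ) ^ i * γ := by
      rw [Finset.mul_sum, Finset.sum_mul]
    rw [harg, eexp_sum]
  rw [hfact, norm_prod]
  have hbound : ∀ d ∈ Finset.range (r + 1),
      ‖1 + eexp ((k : ℝ) * (b : ℝ) ^ d * γ)‖
        ≤ 2 * (1 - Real.pi * (nearestIntDist ((k : ℝ) * (b : ℝ) ^ d * γ)) ^ 2) :=
    fun d _ => abs_one_add_eexp_le _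
  calc (∏ d ∈ Finset.range (r + 1), ‖1 + eexp ((k : ℝ) * (b : ℝ) ^ d * γ)‖)
      ≤ ∏ d ∈ Finset.range (r + 1),
          (2 * (1 - Real.pi * (nearestIntDist ((k : ℝ) * (b : ℝ) ^ d * γ)) ^ 2)) :=
        Finset.prod_le_prod (fun d _ => norm_nonneg _) hbound
    _ = 2 ^ (r + 1) * ∏ d ∈ Finset.range (r + 1),
          (1 - Real.pi * (nearestIntDist ((k : ℝ) * (b : ℝ) ^ d * γ)) ^ 2) := by
        rw [Finset.prod_mul_distrib, Finset.prod_const, Finset.card_range]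
end

section
/- Let k be a positive integer and let u_0, …, u_{k−1} be nonnegative integers with u_0 + ⋯ + u_{k−1} > 0. Then there exist integers v_0, …, v_{k−1} with each v_j ∈ {0, …, b−1}, such that ∑_{j=0}^{k−1} u_j b^j ≡ ∑_{j=0}^{k−1} v_j b^j (mod b^k − 1) and 0 < ∑_{j=0}^{k−1} v_j ≤ ∑_{j=0}^{k−1} u_j. -/
theorem digit_reduction_mod (b k : ℕ) (hb : 2 ≤ b) (hk : 0 < k) (u : ℕ → ℕ)
    (hu : 0 < ∑ j ∈ Finset.range k, u j) :
    ∃ v : ℕ → ℕ, (∀ j < k, v j ≤ b - 1) ∧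
      (∑ j ∈ Finset.range k, u j * b ^ j) ≡ (∑ j ∈ Finset.range k, v j * b ^ j)
        [MOD b ^ k - 1] ∧
      0 < ∑ j ∈ Finset.range k, v j ∧
      (∑ j ∈ Finset.range k, v j) ≤ ∑ j ∈ Finset.range k, u j := by
  suffices H : ∀ n (u : ℕ → ℕ), (∑ j ∈ Finset.range k, u j) = n →
      0 < ∑ j ∈ Finset.range k, u j → ∃ v : ℕ → ℕ, (∀ j < k, v j ≤ b - 1) ∧
      (∑ j ∈ Finset.range k, u j * b ^ j) ≡ (∑ j ∈ Finset.range k, v j * b ^ j)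
        [MOD b ^ k - 1] ∧
      0 < ∑ j ∈ Finset.range k, v j ∧
      (∑ j ∈ Finset.range k, v j) ≤ ∑ j ∈ Finset.range k, u j by
    exact H _ u rfl hu
  intro n
  induction n using Nat.strong_induction_on with
  | _ n ih =>
  intro u hn hpos
  by_cases hall : ∀ j < k, u j ≤ b - 1
  · exact ⟨u, hall, Nat.ModEq.refl _, hpos, le_refl _⟩
  push_neg at hall
  obtain ⟨i, hik, hbi⟩ := hall
  have hbu : b ≤ u i := by omega
  set i' := (i + 1) % k with hi'
  have hi'k : i' < k := Nat.mod_lt _ hk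
  set u' : ℕ → ℕ := fun j => (if j = i then u i - b else u j) + (if j = i' then 1 else 0)
    with hu'
  have hmem : i ∈ Finset.range k := Finset.mem_range.mpr hik
  have hmem' : i' ∈ Finset.range k := Finset.mem_range.mpr hi'k
  have hsum1 : (∑ j ∈ Finset.range k, (if j = i then u i - b else u j)) + b
      = ∑ j ∈ Finset.range k, u j := by
    rw [← Finset.add_sum_erase _ _ hmem, ← Finset.add_sum_erase _ (fun j => u j) hmem]
    have h : ∑ j ∈ (Finset.range k).erase i, (if j = i then u i - b else u j)
        = ∑ j ∈ (Finset.range k).erase i, u j := by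
      apply Finset.sum_congr rfl
      intro x hx
      rw [if_neg (Finset.ne_of_mem_erase hx)]
    rw [h, if_pos rfl]
    omega
  have hsum2 : (∑ j ∈ Finset.range k, (if j = i' then 1 else 0)) = 1 := by
    rw [Finset.sum_ite_eq' (Finset.range k) i' (fun _ => 1), if_pos hmem']
  have hds : ∑ j ∈ Finset.range k, u' j = (∑ j ∈ Finset.range k, u j) - b + 1 := by
    simp only [hu', Finset.sum_add_distrib, hsum2]
    omega
  have hw1 : (∑ j ∈ Finset.range k, (if j = i then u i - b else u j) * b ^ j) + b * b ^ i
      = ∑ j ∈ Finset.range k, u j * b ^ j := by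
    rw [← Finset.add_sum_erase _ _ hmem, ← Finset.add_sum_erase _ (fun j => u j * b ^ j) hmem]
    have h : ∑ j ∈ (Finset.range k).erase i, (if j = i then u i - b else u j) * b ^ j
        = ∑ j ∈ (Finset.range k).erase i, u j * b ^ j := by
      apply Finset.sum_congr rfl
      intro x hx
      rw [if_neg (Finset.ne_of_mem_erase hx)]
    rw [h, if_pos rfl]
    have h2 : (u i - b) * b ^ i + b * b ^ i = u i * b ^ i := by
      rw [← Nat.add_mul]
      congr 1
      omega
    omega
  have hw2 : (∑ j ∈ Finset.range k, (if j = i' then 1 else 0) * b ^ j) = b ^ i' := by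
    have h : ∀ j, (if j = i' then 1 else 0) * b ^ j = if j = i' then b ^ j else 0 := by
      intro j; split <;> simp
    simp only [h]
    rw [Finset.sum_ite_eq' (Finset.range k) i' (fun j => b ^ j), if_pos hmem']
  have heq : (∑ j ∈ Finset.range k, u' j * b ^ j) + b * b ^ i
      = (∑ j ∈ Finset.range k, u j * b ^ j) + b ^ i' := by
    simp only [hu', Nat.add_mul, Finset.sum_add_distrib, hw2]
    omega
  have hmodpow : b ^ i' ≡ b * b ^ i [MOD b ^ k - 1] := by
    rcases Nat.lt_or_ge (i + 1) k with h | h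
    · rw [hi', Nat.mod_eq_of_lt h, pow_succ, mul_comm]
    · have hik1 : i + 1 = k := by omega
      rw [hi', hik1, Nat.mod_self, pow_zero]
      have h2 : b * b ^ i = b ^ k := by rw [← hik1, pow_succ, mul_comm]
      rw [h2]
      exact (Nat.modEq_iff_dvd' (Nat.one_le_pow k b (by omega))).mpr dvd_rfl
  have hcong : (∑ j ∈ Finset.range k, u j * b ^ j)
      ≡ (∑ j ∈ Finset.range k, u' j * b ^ j) [MOD b ^ k - 1] := by
    have h1 : (∑ j ∈ Finset.range k, u j * b ^ j) + b ^ i'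
        ≡ (∑ j ∈ Finset.range k, u' j * b ^ j) + b ^ i' [MOD b ^ k - 1] := by
      rw [← heq]
      exact Nat.ModEq.add_left _ hmodpow.symm
    exact Nat.ModEq.add_right_cancel' _ h1
  have hge : b ≤ ∑ j ∈ Finset.range k, u j :=
    le_trans hbu (Finset.single_le_sum (fun j _ => Nat.zero_le (u j)) hmem)
  have hlt : (∑ j ∈ Finset.range k, u' j) < n := by omega
  have hpos' : 0 < ∑ j ∈ Finset.range k, u' j := by omega
  obtain ⟨v, hv1, hv2, hv3, hv4⟩ := ih _ hlt u' rfl hpos'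
  exact ⟨v, hv1, hcong.trans hv2, hv3, by omega⟩
end

section
/- Let k and t be positive integers. If w is a sum of t (not necessarily distinct) nonnegative integer powers of b, then there exists c ∈ A(b,k,t) with w ≡ c (mod b^k − 1). -/
open Finset

lemma sum_modEq_aux {n : ℕ} (s : Finset ℕ) (f g : ℕ → ℕ)
    (h : ∀ i ∈ s, f i ≡ g i [MOD n]) :
    (∑ i ∈ s, f i) ≡ (∑ i ∈ s, g i) [MOD n] := by
  classical
  induction s using Finset.induction with
  | empty => simp [Nat.ModEq.refl]
  | @insert x s hx ih =>
    simp only [Finset.sum_insert hx]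
    exact (h x (mem_insert_self _ _)).add (ih fun i hi => h i (mem_insert_of_mem hi))

lemma pow_mod_cycle {b k : ℕ} (hb : 2 ≤ b) (hk : 0 < k) (m : ℕ) :
    b ^ m ≡ b ^ (m % k) [MOD b ^ k - 1] := by
  have h1 : 1 ≤ b ^ k := Nat.one_le_pow _ _ (by omega)
  have hbk : (b ^ k) ≡ 1 [MOD b ^ k - 1] :=
    ((Nat.modEq_iff_dvd' h1).mpr dvd_rfl).symm
  conv_lhs => rw [← Nat.div_add_mod m k]
  rw [pow_add, pow_mul]
  calc (b ^ k) ^ (m / k) * b ^ (m % k)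
      ≡ 1 ^ (m / k) * b ^ (m % k) [MOD b ^ k - 1] :=
        Nat.ModEq.mul (hbk.pow _) (Nat.ModEq.refl _)
    _ = b ^ (m % k) := by ring

lemma reduce_carry {b k : ℕ} (hb : 2 ≤ b) (hk : 0 < k) :
    ∀ n (a : ℕ → ℕ), (∑ j ∈ range k, a j) = n → 0 < n →
    ∃ a' : ℕ → ℕ, (∀ j < k, a' j ≤ b - 1) ∧ 0 < (∑ j ∈ range k, a' j) ∧
      (∑ j ∈ range k, a' j) ≤ n ∧
      (∑ j ∈ range k, a j * b ^ j) ≡ (∑ j ∈ range k, a' j * b ^ j) [MOD b ^ k - 1] := by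
  intro n
  induction n using Nat.strong_induction_on with
  | _ n ih =>
    intro a hsum hpos
    by_cases hall : ∀ j < k, a j ≤ b - 1
    · exact ⟨a, hall, hsum ▸ hpos, hsum.le, Nat.ModEq.refl _⟩
    · push_neg at hall
      obtain ⟨j, hjk, hja⟩ := hall
      have hjb : b ≤ a j := by omega
      set j' := (j + 1) % k with hj'
      have hj'k : j' < k := Nat.mod_lt _ hk
      classical
      set a1 := Function.update a j (a j - b) with ha1
      set a' := Function.update a1 j' (a1 j' + 1) with ha'
      -- key pointwise identity
      have key : ∀ i ∈ range k,
          a' i * b ^ i + (if i = j then b ^ (j + 1) else 0)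
          = a i * b ^ i + (if i = j' then b ^ j' else 0) := by
        intro i _
        obtain ⟨c, hc⟩ : ∃ c, a j = c + b := ⟨a j - b, by omega⟩
        by_cases hij : i = j
        · subst hij
          by_cases hij' : i = j'
          · simp only [ha', ha1, hij', Function.update_self, if_true]
            rw [← hij', hc, Nat.add_sub_cancel, pow_succ]
            ring
          · simp only [ha', ha1, Function.update_of_ne (fun h => hij' h),
              Function.update_self, if_pos rfl, if_neg hij']
            rw [hc, Nat.add_sub_cancel, pow_succ, if_pos trivial]
            ring
        · by_cases hij' : i = j'
          · subst hij'
            simp only [ha', ha1, Function.update_self, if_neg hij, if_pos rfl,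
              Function.update_of_ne hij, if_true]
            ring
          · simp only [ha', ha1, Function.update_of_ne hij', Function.update_of_ne hij,
              if_neg hij, if_neg hij']
      have keysum : (∑ i ∈ range k, a' i * b ^ i) + b ^ (j + 1)
          = (∑ i ∈ range k, a i * b ^ i) + b ^ j' := by
        have := Finset.sum_congr rfl key
        rwa [Finset.sum_add_distrib, Finset.sum_add_distrib,
          Finset.sum_ite_eq' (range k) j (fun _ => b ^ (j+1)),
          Finset.sum_ite_eq' (range k) j' (fun _ => b ^ j'),
          if_pos (mem_range.mpr hjk), if_pos (mem_range.mpr hj'k)] at this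
      -- congruence between a and a'
      have hcong : (∑ i ∈ range k, a i * b ^ i) ≡ (∑ i ∈ range k, a' i * b ^ i)
          [MOD b ^ k - 1] := by
        have hpow : b ^ j' ≡ b ^ (j + 1) [MOD b ^ k - 1] := by
          have := pow_mod_cycle hb hk (j + 1)
          exact this.symm
        have h1 : (∑ i ∈ range k, a i * b ^ i) + b ^ j'
            ≡ (∑ i ∈ range k, a' i * b ^ i) + b ^ j' [MOD b ^ k - 1] := by
          calc (∑ i ∈ range k, a i * b ^ i) + b ^ j'
              = (∑ i ∈ range k, a' i * b ^ i) + b ^ (j + 1) := keysum.symm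
            _ ≡ (∑ i ∈ range k, a' i * b ^ i) + b ^ j' [MOD b ^ k - 1] :=
              (Nat.ModEq.refl _).add hpow.symm
        exact h1.add_right_cancel' _
      -- new total sum
      have hsum' : (∑ i ∈ range k, a' i) = n - b + 1 := by
        have h1 : (∑ i ∈ range k, a1 i) = n - b := by
          rw [ha1, Finset.sum_update_of_mem (mem_range.mpr hjk), ← Finset.erase_eq,
            ← hsum, ← Finset.sum_erase_add (range k) a (mem_range.mpr hjk)]
          omega
        rw [ha', Finset.sum_update_of_mem (mem_range.mpr hj'k), ← Finset.erase_eq]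
        rw [← Finset.sum_erase_add (range k) a1 (mem_range.mpr hj'k)] at h1
        omega
      have hbn : b ≤ n := by
        rw [← hsum]
        calc b ≤ a j := hjb
          _ ≤ _ := Finset.single_le_sum (fun i _ => Nat.zero_le _) (mem_range.mpr hjk)
      have hlt : n - b + 1 < n := by omega
      obtain ⟨a'', h1, h2, h3, h4⟩ := ih (n - b + 1) hlt a' hsum' (by omega)
      exact ⟨a'', h1, h2, by omega, hcong.trans h4⟩

/-- Any sum of `t` nonnegative-integer powers of `b` is congruent mod `b^k - 1`
to an element of `A(b,k,t)`. -/
theorem power_sum_congruent_to_A (b k t : ℕ) (hb : 2 ≤ b) (hk : 0 < k) (ht : 0 < t)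
    (u : ℕ → ℕ) :
    ∃ a : ℕ → ℕ, (∀ j < k, a j ≤ b - 1) ∧
      0 < (∑ j ∈ Finset.range k, a j) ∧ (∑ j ∈ Finset.range k, a j) ≤ t ∧
      (∑ d ∈ Finset.range t, b ^ u d) ≡ (∑ j ∈ Finset.range k, a j * b ^ j)
        [MOD b ^ k - 1] := by
  classical
  set a0 : ℕ → ℕ := fun j => ((range t).filter (fun d => u d % k = j)).card with ha0
  have hmaps : ∀ d ∈ range t, u d % k ∈ range k :=
    fun d _ => mem_range.mpr (Nat.mod_lt _ hk)
  have hsum0 : (∑ j ∈ range k, a0 j) = t := by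
    rw [ha0]
    simpa using (Finset.card_eq_sum_card_fiberwise hmaps).symm
  have hcong0 : (∑ d ∈ range t, b ^ u d) ≡ (∑ j ∈ range k, a0 j * b ^ j)
      [MOD b ^ k - 1] := by
    have step1 : (∑ d ∈ range t, b ^ u d) ≡ (∑ d ∈ range t, b ^ (u d % k))
        [MOD b ^ k - 1] :=
      sum_modEq_aux _ _ _ (fun d _ => pow_mod_cycle hb hk (u d))
    have step2 : (∑ d ∈ range t, b ^ (u d % k)) = ∑ j ∈ range k, a0 j * b ^ j := by
      rw [← Finset.sum_fiberwise_of_maps_to hmaps (fun d => b ^ (u d % k))]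
      refine Finset.sum_congr rfl fun j hj => ?_
      rw [ha0]
      rw [Finset.sum_congr rfl (fun d hd => by
        rw [(Finset.mem_filter.mp hd).2]), Finset.sum_const, smul_eq_mul]
    exact step1.trans (step2 ▸ Nat.ModEq.refl _)
  obtain ⟨a, h1, h2, h3, h4⟩ := reduce_carry hb hk t a0 hsum0 ht
  exact ⟨a, h1, h2, h3, hcong0.trans h4⟩
end

section
/- Let k and t be positive integers with k > t/(b−1). Then no sum of t (not necessarily distinct) nonnegative integer powers of b is divisible by b^k − 1. -/
lemma geom_aux (b : ℕ) (hb : 1 ≤ b) :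
    ∀ k : ℕ, ∑ j ∈ Finset.range k, (b - 1) * b ^ j = b ^ k - 1 := by
  intro k
  induction k with
  | zero => simp
  | succ k ih =>
    rw [Finset.sum_range_succ, ih, pow_succ]
    have hx : 1 ≤ b ^ k := Nat.one_le_pow _ _ (by omega)
    rw [mul_comm (b - 1)]
    have h1 : b ^ k * b = b ^ k * (b - 1) + b ^ k := by rw [← Nat.mul_succ]; congr 1; omega
    omega

lemma key_aux (b k : ℕ) (hb : 2 ≤ b) (hk : 0 < k) :
    ∀ t : ℕ, ∀ c : ℕ → ℕ, (∑ j ∈ Finset.range k, c j) = t →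
      0 < ∑ j ∈ Finset.range k, c j * b ^ j →
      (b ^ k - 1) ∣ ∑ j ∈ Finset.range k, c j * b ^ j →
      k * (b - 1) ≤ t := by
  intro t
  induction t using Nat.strong_induction_on with
  | _ t ih =>
  intro c hct hMpos hdvd
  rcases Nat.lt_or_ge k 2 with hk2 | hk2
  · -- k = 1
    have hk1 : k = 1 := by omega
    subst hk1
    simp only [Finset.sum_range_one, pow_zero, mul_one, pow_one] at hct hMpos hdvd
    have := Nat.le_of_dvd hMpos hdvd
    omega
  · by_cases hsmall : ∀ j ∈ Finset.range k, c j ≤ b - 1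
    · -- all digits small: the value equals b^k - 1 exactly
      have hle : ∀ j ∈ Finset.range k, c j * b ^ j ≤ (b - 1) * b ^ j :=
        fun j hj => Nat.mul_le_mul_right _ (hsmall j hj)
      have hgeom := geom_aux b (by omega) k
      have hMle : ∑ j ∈ Finset.range k, c j * b ^ j ≤ b ^ k - 1 := by
        calc ∑ j ∈ Finset.range k, c j * b ^ j
            ≤ ∑ j ∈ Finset.range k, (b - 1) * b ^ j := Finset.sum_le_sum hle
          _ = b ^ k - 1 := hgeom
      have hM : ∑ j ∈ Finset.range k, c j * b ^ j = b ^ k - 1 :=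
        le_antisymm hMle (Nat.le_of_dvd hMpos hdvd)
      have heq := (Finset.sum_eq_sum_iff_of_le hle).mp (hM.trans hgeom.symm)
      have hc : ∀ j ∈ Finset.range k, c j = b - 1 := by
        intro j hj
        have hpow : 0 < b ^ j := Nat.pow_pos (by omega)
        exact Nat.eq_of_mul_eq_mul_right hpow (heq j hj)
      have hEq : k * (b - 1) = t := by
        calc k * (b - 1) = ∑ _j ∈ Finset.range k, (b - 1) := by
              rw [Finset.sum_const, Finset.card_range, smul_eq_mul]
          _ = ∑ j ∈ Finset.range k, c j := (Finset.sum_congr rfl hc).symm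
          _ = t := hct
      exact hEq.le
    · -- some digit ≥ b : carry
      push_neg at hsmall
      obtain ⟨j, hjmem, hjb⟩ := hsmall
      have hj : j < k := Finset.mem_range.mp hjmem
      have hcj : b ≤ c j := by omega
      set j' := (j + 1) % k with hj'def
      have hj' : j' < k := Nat.mod_lt _ hk
      have hj'mem : j' ∈ Finset.range k := Finset.mem_range.mpr hj'
      have hj'cases : (j + 1 < k ∧ j' = j + 1) ∨ (j + 1 = k ∧ j' = 0) := by
        rcases Nat.lt_or_ge (j + 1) k with h | h
        · exact Or.inl ⟨h, Nat.mod_eq_of_lt h⟩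
        · have : j + 1 = k := by omega
          exact Or.inr ⟨this, by rw [hj'def, this, Nat.mod_self]⟩
      have hjj' : j' ≠ j := by rcases hj'cases with ⟨_, h⟩ | ⟨h1, h⟩ <;> omega
      set c' : ℕ → ℕ :=
        fun i => (if i = j then c i - b else c i) + (if i = j' then 1 else 0) with hc'def
      -- generic sum computations
      have hA : ∀ f : ℕ → ℕ,
          (∑ i ∈ Finset.range k, (if i = j then c i - b else c i) * f i) + b * f j
            = ∑ i ∈ Finset.range k, c i * f i := by
        intro f
        have h1 : b * f j = ∑ i ∈ Finset.range k, (if i = j then b * f i else 0) := by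
          rw [Finset.sum_ite_eq' (Finset.range k) j fun i => b * f i, if_pos hjmem]
        rw [h1, ← Finset.sum_add_distrib]
        refine Finset.sum_congr rfl fun i _ => ?_
        by_cases h : i = j
        · simp only [if_pos h]
          have hbf : b * f i ≤ c i * f i := Nat.mul_le_mul_right _ (h ▸ hcj)
          rw [Nat.sub_mul]
          omega
        · simp [h]
      have hB : ∀ f : ℕ → ℕ,
          ∑ i ∈ Finset.range k, c' i * f i
            = (∑ i ∈ Finset.range k, (if i = j then c i - b else c i) * f i) + f j' := by
        intro f
        have h1 : f j' = ∑ i ∈ Finset.range k, (if i = j' then f i else 0) := by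
          rw [Finset.sum_ite_eq' (Finset.range k) j' f, if_pos hj'mem]
        rw [h1, ← Finset.sum_add_distrib]
        refine Finset.sum_congr rfl fun i _ => ?_
        by_cases h : i = j'
        · simp [hc'def, h, add_mul]
        · simp [hc'def, h, add_mul]
      -- coefficient sum of c'
      have hAt := hA fun _ => 1
      have hBt := hB fun _ => 1
      simp only [mul_one] at hAt hBt
      have htb : b ≤ t := by
        have : c j ≤ ∑ i ∈ Finset.range k, c i :=
          Finset.single_le_sum (fun i _ => Nat.zero_le _) hjmem
        omega
      have ht' : ∑ i ∈ Finset.range k, c' i = t - b + 1 := by omega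
      -- values
      have hAv := hA fun i => b ^ i
      have hBv := hB fun i => b ^ i
      -- positivity of new value
      have hM'pos : 0 < ∑ i ∈ Finset.range k, c' i * b ^ i := by
        have h1 : 1 ≤ c' j' := by simp [hc'def, hjj']
        have h2 : c' j' * b ^ j' ≤ ∑ i ∈ Finset.range k, c' i * b ^ i :=
          Finset.single_le_sum (f := fun i => c' i * b ^ i) (fun i _ => Nat.zero_le _) hj'mem
        have h3 : 0 < b ^ j' := Nat.pow_pos (by omega)
        have := Nat.mul_le_mul h1 (le_refl (b ^ j'))
        nlinarith
      -- divisibility of new value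
      have hdvd' : (b ^ k - 1) ∣ ∑ i ∈ Finset.range k, c' i * b ^ i := by
        rcases hj'cases with ⟨hlt, hje⟩ | ⟨heq, hje⟩
        · -- value unchanged
          have : ∑ i ∈ Finset.range k, c' i * b ^ i = ∑ i ∈ Finset.range k, c i * b ^ i := by
            rw [hBv, ← hAv, hje, pow_succ]
            ring
          rwa [this]
        · -- j = k - 1 : value drops by b^k - 1
          have hbk : b * b ^ j = b ^ k := by rw [← pow_succ', ← heq, pow_succ']
          have hbk1 : 1 ≤ b ^ k := Nat.one_le_pow _ _ (by omega)
          have hrel : (∑ i ∈ Finset.range k, c' i * b ^ i) + b ^ k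
              = (∑ i ∈ Finset.range k, c i * b ^ i) + 1 := by
            rw [hBv, hje, pow_zero, ← hbk, ← hAv]
            ring
          have hsub : ∑ i ∈ Finset.range k, c' i * b ^ i
              = (∑ i ∈ Finset.range k, c i * b ^ i) - (b ^ k - 1) := by omega
          rw [hsub]
          exact Nat.dvd_sub hdvd dvd_rfl
      have hIH := ih (t - b + 1) (by omega) c' ht' hM'pos hdvd'
      omega

/-- If `k > t/(b-1)` then no sum of `t` nonnegative-integer powers of `b`
is divisible by `b^k - 1`. -/
theorem power_sum_not_dvd (b k t : ℕ) (hb : 2 ≤ b) (hk : 0 < k) (ht : 0 < t)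
    (hkt : (t : ℝ) / ((b : ℝ) - 1) < (k : ℝ)) (u : ℕ → ℕ) :
    ¬ (b ^ k - 1) ∣ (∑ d ∈ Finset.range t, b ^ u d) := by
  intro hdvd
  -- translate the real inequality
  have hbR : (0 : ℝ) < (b : ℝ) - 1 := by
    have : (2 : ℝ) ≤ (b : ℝ) := by exact_mod_cast hb
    linarith
  have ht2 : t < k * (b - 1) := by
    have h1 : (t : ℝ) < (k : ℝ) * ((b : ℝ) - 1) := by
      rw [div_lt_iff₀ hbR] at hkt; linarith
    have h2 : ((k * (b - 1) : ℕ) : ℝ) = (k : ℝ) * ((b : ℝ) - 1) := by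
      push_cast [Nat.cast_sub (by omega : 1 ≤ b)]; ring
    have : (t : ℝ) < ((k * (b - 1) : ℕ) : ℝ) := by rw [h2]; exact h1
    exact_mod_cast this
  set n := b ^ k - 1 with hn
  have hbk1 : 2 ≤ b ^ k := Nat.one_lt_pow (by omega) (by omega)
  haveI : NeZero n := ⟨by omega⟩
  -- replace exponents by their residues mod k
  have hbkZ : ((b : ZMod n)) ^ k = 1 := by
    have h1 : ((b ^ k : ℕ) : ZMod n) = ((n + 1 : ℕ) : ZMod n) := by congr 1; omega
    push_cast at h1
    rw [ZMod.natCast_self] at h1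
    rw [h1]; ring
  have hmod : ((∑ d ∈ Finset.range t, b ^ u d : ℕ) : ZMod n)
      = ((∑ d ∈ Finset.range t, b ^ (u d % k) : ℕ) : ZMod n) := by
    push_cast
    refine Finset.sum_congr rfl fun d _ => ?_
    conv_lhs => rw [← Nat.div_add_mod (u d) k]
    rw [pow_add, pow_mul, hbkZ, one_pow, one_mul]
  have hdvd2 : n ∣ ∑ d ∈ Finset.range t, b ^ (u d % k) := by
    have h0 : ((∑ d ∈ Finset.range t, b ^ u d : ℕ) : ZMod n) = 0 :=
      (ZMod.natCast_eq_zero_iff _ _).mpr hdvd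
    exact (ZMod.natCast_eq_zero_iff _ _).mp (by rw [← hmod]; exact h0)
  -- fiberwise decomposition
  set c : ℕ → ℕ := fun j => ((Finset.range t).filter fun d => u d % k = j).card with hcdef
  have hmaps : ∀ d ∈ Finset.range t, u d % k ∈ Finset.range k :=
    fun d _ => Finset.mem_range.mpr (Nat.mod_lt _ hk)
  have hfib := Finset.sum_fiberwise_of_maps_to (g := fun d => u d % k)
    (f := fun d => b ^ (u d % k)) hmaps
  have hinner : ∀ j, (∑ d ∈ (Finset.range t).filter fun d => u d % k = j, b ^ (u d % k))
      = c j * b ^ j := by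
    intro j
    rw [Finset.sum_congr rfl fun d hd => by rw [(Finset.mem_filter.mp hd).2],
      Finset.sum_const, smul_eq_mul]
  have hMeq : ∑ j ∈ Finset.range k, c j * b ^ j = ∑ d ∈ Finset.range t, b ^ (u d % k) := by
    rw [← hfib]
    exact Finset.sum_congr rfl fun j _ => (hinner j).symm
  have hcard : ∑ j ∈ Finset.range k, c j = t := by
    have := Finset.card_eq_sum_card_fiberwise hmaps
    rw [Finset.card_range] at this
    exact this.symm
  have hMpos : 0 < ∑ j ∈ Finset.range k, c j * b ^ j := by
    rw [hMeq]
    exact Finset.sum_pos (fun d _ => Nat.pow_pos (by omega))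
      (Finset.nonempty_range_iff.mpr (by omega))
  have hfinal := key_aux b k hb hk t c hcard hMpos (hMeq ▸ hdvd2)
  omega
end

section
/- For every positive integer N there exists a real number γ_N such that for all n with 1 ≤ n ≤ N, ‖γ_N · b_n‖ ≥ (1/b⁴) · N^{−(log₂ b)/(b−1)}. -/
/-- `n` is a positive integer all of whose base-`b` digits lie in `{0,1}`. -/
def InDb (b n : ℕ) : Prop := n ≠ 0 ∧ ∀ d ∈ Nat.digits b n, d ≤ 1

namespace BadApprox

/-- read the binary digits of `n` in base `b` -/
def g (b n : ℕ) : ℕ := Nat.ofDigits b (Nat.digits 2 n)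

lemma g_rec (b : ℕ) {n : ℕ} (hn : 0 < n) : g b n = n % 2 + b * g b (n / 2) := by
  unfold g
  rw [Nat.digits_def' (by norm_num : (1:ℕ) < 2) hn, Nat.ofDigits_cons]

lemma g_pos (b : ℕ) (hb : 2 ≤ b) : ∀ {n : ℕ}, 0 < n → 0 < g b n := by
  intro n
  induction n using Nat.strong_induction_on with
  | _ n ih =>
    intro hn
    rw [g_rec b hn]
    rcases Nat.lt_or_ge n 2 with h | h
    · interval_cases n
      · simp
    · have h2 : 0 < n / 2 := Nat.div_pos h (by norm_num)
      have := ih (n / 2) (Nat.div_lt_self hn (by norm_num)) h2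
      positivity

lemma g_strictMono (b : ℕ) (hb : 2 ≤ b) : StrictMono (g b) := by
  intro m n hmn
  induction n using Nat.strong_induction_on generalizing m with
  | _ n ih =>
    rcases Nat.eq_zero_or_pos m with rfl | hm
    · simpa [g] using g_pos b hb hmn
    · have hn : 0 < n := lt_trans hm hmn
      rw [g_rec b hm, g_rec b hn]
      rcases Nat.lt_or_ge (m / 2) (n / 2) with h | h
      · have hg : g b (m / 2) < g b (n / 2) :=
          ih (n / 2) (Nat.div_lt_self hn (by norm_num)) h
        have h1 : m % 2 + b * g b (m / 2) < b * (g b (m / 2) + 1) := by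
          have := Nat.mod_lt m (show 0 < 2 by norm_num)
          nlinarith
        have h2 : b * (g b (m / 2) + 1) ≤ b * g b (n / 2) :=
          Nat.mul_le_mul_left b hg
        omega
      · have hd : m / 2 = n / 2 := by omega
        have hr : m % 2 < n % 2 := by omega
        rw [hd]; omega

lemma digits_g (b : ℕ) (hb : 2 ≤ b) {n : ℕ} (hn : 0 < n) :
    Nat.digits b (g b n) = Nat.digits 2 n := by
  refine Nat.digits_ofDigits b (by omega) _ (fun l hl => ?_) (fun h => ?_)
  · exact lt_of_lt_of_le (Nat.digits_lt_base (by norm_num) hl) hb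
  · exact Nat.getLast_digit_ne_zero 2 hn.ne'


lemma ofDigits_eq_sum (b : ℕ) : ∀ (L : List ℕ) {c : ℕ}, L.length ≤ c →
    Nat.ofDigits b L = ∑ i ∈ Finset.range c, L.getD i 0 * b ^ i := by
  intro L
  induction L with
  | nil => intro c _; simp [Nat.ofDigits_nil]
  | cons a L ih =>
      intro c hc
      obtain ⟨c', rfl⟩ : ∃ c', c = c' + 1 := by
        cases c with
        | zero => simp at hc
        | succ c' => exact ⟨c', rfl⟩
      rw [Nat.ofDigits_cons, Finset.sum_range_succ']
      simp only [List.getD_cons_succ, List.getD_cons_zero, pow_zero, mul_one]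
      rw [ih (by simpa using hc), Finset.mul_sum]
      rw [add_comm]
      congr 1
      refine Finset.sum_congr rfl (fun i _ => ?_)
      ring

lemma cyc_sum (b T : ℕ) : ∀ c : ℕ,
    ∑ i ∈ Finset.range (c * T), b ^ (i % T) = c * ∑ r ∈ Finset.range T, b ^ r := by
  intro c
  induction c with
  | zero => simp
  | succ c ih =>
      have : (c + 1) * T = c * T + T := by ring
      rw [this, Finset.sum_range_add, ih, add_mul, one_mul]
      congr 1
      refine Finset.sum_congr rfl (fun i hi => ?_)
      have hi' : i < T := Finset.mem_range.mp hi
      rw [add_comm (c * T) i, Nat.add_mul_mod_self_right, Nat.mod_eq_of_lt hi']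

lemma geom_nat (b T : ℕ) : (b - 1) * (∑ r ∈ Finset.range T, b ^ r) + 1 = b ^ T ∨ b = 0 := by
  rcases Nat.eq_zero_or_pos b with rfl | hb
  · right; rfl
  · left
    obtain ⟨b', rfl⟩ : ∃ b', b = b' + 1 := ⟨b - 1, by omega⟩
    simp only [Nat.add_sub_cancel]
    induction T with
    | zero => simp
    | succ T ih =>
        rw [Finset.sum_range_succ, Nat.mul_add, pow_succ]
        have h2 : (b' + 1) ^ T * (b' + 1) = b' * (b' + 1) ^ T + (b' + 1) ^ T := by ring
        omega

/-- Key divisibility: a nonzero number with 0/1 digits base `b` and fewer than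
`(b-1)*T` digits is not divisible by `b^T - 1`. -/
lemma key (b T : ℕ) (hb : 2 ≤ b) (L : List ℕ) (hL1 : ∀ l ∈ L, l ≤ 1)
    (hlen : L.length < (b - 1) * T) (hm : Nat.ofDigits b L ≠ 0) :
    ¬ (b ^ T - 1 ∣ Nat.ofDigits b L) := by
  set m := Nat.ofDigits b L with hmdef
  set k := L.length with hk
  set q := b ^ T - 1 with hq
  set d : ℕ → ℕ := fun i => L.getD i 0 with hd
  have hd1 : ∀ i, d i ≤ 1 := by
    intro i
    rcases Nat.lt_or_ge i L.length with h | h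
    · rw [hd]; simp only []
      rw [List.getD_eq_getElem _ _ h]
      exact hL1 _ (List.getElem_mem h)
    · rw [hd]; simp only []
      rw [List.getD_eq_default _ _ h]
      exact Nat.zero_le 1
  have hmsum : m = ∑ i ∈ Finset.range k, d i * b ^ i :=
    ofDigits_eq_sum b L le_rfl
  set m' : ℕ := ∑ i ∈ Finset.range k, d i * b ^ (i % T) with hm'
  -- m ≡ m' mod q (in ℤ)
  have hbT1 : (1:ℕ) ≤ b ^ T := Nat.one_le_pow _ _ (by omega)
  have hqz : (q : ℤ) = (b : ℤ) ^ T - 1 := by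
    rw [hq]; push_cast [Nat.cast_sub hbT1]; ring
  have hdvd : (q : ℤ) ∣ ((m : ℕ) : ℤ) - ((m' : ℕ) : ℤ) := by
    rw [hmsum, hm']
    push_cast
    rw [← Finset.sum_sub_distrib]
    refine Finset.dvd_sum (fun i _ => ?_)
    have h1 : (b : ℤ) ^ i = ((b:ℤ) ^ T) ^ (i / T) * (b:ℤ) ^ (i % T) := by
      rw [← pow_mul, ← pow_add, Nat.div_add_mod]
    have h2 : (q : ℤ) ∣ ((b:ℤ) ^ T) ^ (i / T) - 1 := by
      rw [hqz]
      simpa using sub_dvd_pow_sub_pow ((b:ℤ) ^ T) 1 (i / T)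
    have h3 : (d i : ℤ) * (b:ℤ) ^ i - (d i : ℤ) * (b:ℤ) ^ (i % T)
        = ((d i : ℤ) * (b:ℤ) ^ (i % T)) * (((b:ℤ) ^ T) ^ (i / T) - 1) := by
      rw [h1]; ring
    rw [h3]
    exact Dvd.dvd.mul_left h2 _
  -- m' is positive
  have hm'pos : 0 < m' := by
    rcases Nat.eq_zero_or_pos m' with h0 | h
    · exfalso
      apply hm
      rw [hmdef] at hmsum ⊢
      rw [hmsum]
      rw [hm'] at h0
      refine Finset.sum_eq_zero (fun i hi => ?_)
      have hz := Finset.sum_eq_zero_iff.mp h0 i hi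
      have hbpos : 0 < b ^ (i % T) := Nat.pow_pos (by omega)
      have hdz : d i = 0 := by
        rcases Nat.mul_eq_zero.mp hz with h | h
        · exact h
        · omega
      simp [hdz]
    · exact h
  -- m' < q
  have hm'lt : m' < q := by
    have h1 : m' ≤ ∑ i ∈ Finset.range k, b ^ (i % T) := by
      refine Finset.sum_le_sum (fun i _ => ?_)
      calc d i * b ^ (i % T) ≤ 1 * b ^ (i % T) := Nat.mul_le_mul_right _ (hd1 i)
        _ = b ^ (i % T) := one_mul _
    set M := (b - 1) * T - 1 with hM
    have hkM : k ≤ M := by omega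
    have h2 : ∑ i ∈ Finset.range k, b ^ (i % T) ≤ ∑ i ∈ Finset.range M, b ^ (i % T) := by
      refine Finset.sum_le_sum_of_subset ?_
      exact Finset.range_subset_range.mpr hkM
    have hfull : ∑ i ∈ Finset.range (M + 1), b ^ (i % T) = q := by
      have hM1 : M + 1 = (b - 1) * T := by omega
      rw [hM1, cyc_sum]
      rcases geom_nat b T with h | h
      · omega
      · omega
    have h3 : ∑ i ∈ Finset.range (M + 1), b ^ (i % T)
        = ∑ i ∈ Finset.range M, b ^ (i % T) + b ^ (M % T) := Finset.sum_range_succ _ _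
    have hple : 1 ≤ b ^ (M % T) := Nat.one_le_pow _ _ (by omega)
    omega
  -- conclude
  intro hdvdnat
  have : (q : ℤ) ∣ (m' : ℤ) := by
    have h1 : (q : ℤ) ∣ ((m : ℕ) : ℤ) := Int.natCast_dvd_natCast.mpr hdvdnat
    have := dvd_sub h1 hdvd
    simpa using this
  have : q ∣ m' := Int.natCast_dvd_natCast.mp this
  have := Nat.le_of_dvd hm'pos this
  omega



lemma range_g (b : ℕ) (hb : 2 ≤ b) :
    Set.range (fun n => g b (n + 1)) = {m | InDb b m} := by
  ext m
  simp only [Set.mem_range, Set.mem_setOf_eq]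
  constructor
  · rintro ⟨j, rfl⟩
    have hj : 0 < j + 1 := Nat.succ_pos j
    have hpos : 0 < g b (j + 1) := g_pos b hb hj
    refine ⟨hpos.ne', fun d hd => ?_⟩
    rw [digits_g b hb hj] at hd
    have := Nat.digits_lt_base (by norm_num) hd
    omega
  · rintro ⟨hm0, hm1⟩
    set n := Nat.ofDigits 2 (Nat.digits b m) with hn
    have hdig : Nat.digits 2 n = Nat.digits b m := by
      refine Nat.digits_ofDigits 2 (by norm_num) _ (fun l hl => ?_) (fun h => ?_)
      · have := hm1 l hl; omega
      · exact Nat.getLast_digit_ne_zero b hm0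
    have hn0 : n ≠ 0 := by
      intro h
      apply hm0
      have h2 : Nat.digits b m = [] := by rw [← hdig, h]; simp
      exact Nat.digits_eq_nil_iff_eq_zero.mp h2
    refine ⟨n - 1, ?_⟩
    have h3 : n - 1 + 1 = n := by omega
    show g b (n - 1 + 1) = m
    rw [h3]
    show Nat.ofDigits b (Nat.digits 2 n) = m
    rw [hdig, Nat.ofDigits_digits]


end BadApprox

/-- `f` enumerates `D_b` in increasing order (so `b_m = f (m-1)`). For every `N ≥ 1`
there is `γ_N` with `‖γ_N b_n‖ ≥ b⁻⁴ N^{-(log₂ b)/(b-1)}` for `1 ≤ n ≤ N`. -/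
theorem exists_badly_approximable (b : ℕ) (hb : 2 ≤ b)
    (f : ℕ → ℕ) (hf : StrictMono f) (hrange : Set.range f = {n | InDb b n})
    (N : ℕ) (hN : 1 ≤ N) :
    ∃ γ : ℝ, ∀ n : ℕ, 1 ≤ n → n ≤ N →
      (1 / (b : ℝ) ^ 4) * (N : ℝ) ^ (-(Real.logb 2 b) / ((b : ℝ) - 1))
        ≤ nearestIntDist (γ * (f (n - 1) : ℝ)) := by
  classical
  -- identify the enumeration
  have hsm : StrictMono (fun j => BadApprox.g b (j + 1)) := by
    intro i j hij
    exact BadApprox.g_strictMono b hb (by omega)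
  have hfg : f = fun j => BadApprox.g b (j + 1) :=
    (hf.range_inj hsm).mp (hrange.trans (BadApprox.range_g b hb).symm)
  -- parameters
  set k := Nat.log 2 N + 1 with hkdef
  set T := (k + b - 1) / (b - 1) with hTdef
  set q := b ^ T - 1 with hqdef
  have hb1 : 1 ≤ b - 1 := by omega
  have hdm := Nat.div_add_mod (k + b - 1) (b - 1)
  have hmod := Nat.mod_lt (k + b - 1) (show 0 < b - 1 by omega)
  rw [← hTdef] at hdm
  have hT1 : k + 1 ≤ (b - 1) * T := by omega
  have hT2 : (b - 1) * T ≤ k + b - 1 := by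
    rw [mul_comm]; exact Nat.div_mul_le_self _ _
  have hTpos : 0 < T := by
    rcases Nat.eq_zero_or_pos T with h | h
    · rw [h, Nat.mul_zero] at hT1; omega
    · exact h
  have hbTpow : 2 ≤ b ^ T := by
    calc 2 = 2 ^ 1 := rfl
    _ ≤ 2 ^ T := Nat.pow_le_pow_right (by norm_num) hTpos
    _ ≤ b ^ T := Nat.pow_le_pow_left hb T
  have hq1 : 1 ≤ q := by omega
  have hqR : (0:ℝ) < (q:ℝ) := by exact_mod_cast hq1
  refine ⟨(q : ℝ)⁻¹, ?_⟩
  intro n hn1 hnN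
  have hn0 : 0 < n := hn1
  have hfn : f (n - 1) = BadApprox.g b n := by
    rw [hfg]; simp only []; congr 1; omega
  set m := BadApprox.g b n with hmdef
  have hmpos : 0 < m := BadApprox.g_pos b hb hn0
  have hlen : (Nat.digits 2 n).length ≤ k := by
    rw [Nat.digits_len 2 n (by norm_num) hn0.ne']
    have := Nat.log_mono_right (b := 2) hnN
    omega
  have hkey : ¬ (q ∣ m) := by
    rw [hqdef, hmdef]
    exact BadApprox.key b T hb (Nat.digits 2 n)
      (fun l hl => by have := Nat.digits_lt_base (by norm_num) hl; omega)
      (by omega)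
      hmpos.ne'
  -- Step A : distance to nearest integer is at least 1/q
  have stepA : (q:ℝ)⁻¹ ≤ nearestIntDist ((q:ℝ)⁻¹ * (m:ℝ)) := by
    set z := round ((q:ℝ)⁻¹ * (m:ℝ)) with hz
    have hne : (m : ℤ) - z * (q:ℤ) ≠ 0 := by
      intro h
      apply hkey
      have hdq : ((q:ℕ) : ℤ) ∣ ((m:ℕ) : ℤ) := ⟨z, by linarith⟩
      exact_mod_cast hdq
    have habs : (1:ℝ) ≤ |(m:ℝ) - (z:ℝ) * (q:ℝ)| := by
      have h1 : (1:ℤ) ≤ |(m : ℤ) - z * (q:ℤ)| := Int.one_le_abs hne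
      calc (1:ℝ) = ((1:ℤ):ℝ) := by norm_num
        _ ≤ ((|(m:ℤ) - z * (q:ℤ)| : ℤ) : ℝ) := by exact_mod_cast h1
        _ = |(m:ℝ) - (z:ℝ) * (q:ℝ)| := by push_cast; ring_nf
    have heq : nearestIntDist ((q:ℝ)⁻¹ * (m:ℝ)) = |(m:ℝ) - (z:ℝ) * (q:ℝ)| / (q:ℝ) := by
      rw [nearestIntDist, ← hz]
      have h2 : (q:ℝ)⁻¹ * (m:ℝ) - (z:ℝ) = ((m:ℝ) - (z:ℝ) * (q:ℝ)) / (q:ℝ) := by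
        field_simp
      rw [h2, abs_div, abs_of_pos hqR]
    rw [heq, inv_eq_one_div]
    gcongr
  -- Step B : 1/q is large enough
  have stepB : (1 / (b : ℝ) ^ 4) * (N : ℝ) ^ (-(Real.logb 2 b) / ((b : ℝ) - 1))
      ≤ (q:ℝ)⁻¹ := by
    set lb := Real.logb 2 b with hlb
    set ln := Real.logb 2 N with hln
    have hb2R : (2:ℝ) ≤ (b:ℝ) := by exact_mod_cast hb
    have hbposR : (0:ℝ) < (b:ℝ) := by linarith
    have hb1R : (0:ℝ) < (b:ℝ) - 1 := by linarith
    have hNposR : (0:ℝ) < (N:ℝ) := by exact_mod_cast hN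
    have hN1R : (1:ℝ) ≤ (N:ℝ) := by exact_mod_cast hN
    have hlbpos : 0 < lb := Real.logb_pos (by norm_num) (by linarith)
    have hlnpos : 0 ≤ ln := Real.logb_nonneg (by norm_num) hN1R
    have hnatlog : (Nat.log 2 N : ℝ) ≤ ln := Real.natLog_le_logb N 2
    -- key numeric inequality
    have hkeyineq : (T:ℝ) * ((b:ℝ) - 1) ≤ ln + 4 * ((b:ℝ) - 1) := by
      have h1 : ((b-1) * T : ℕ) ≤ (Nat.log 2 N : ℕ) + b := by omega
      have h2 : ((b:ℝ) - 1) * (T:ℝ) ≤ (Nat.log 2 N : ℝ) + (b:ℝ) := by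
        have := (Nat.cast_le (α := ℝ)).mpr h1
        push_cast [Nat.cast_sub (show 1 ≤ b by omega)] at this
        linarith
      nlinarith
    have hTle : (T:ℝ) ≤ 4 + ln / ((b:ℝ) - 1) := by
      rw [show (4:ℝ) + ln / ((b:ℝ)-1) = (ln + 4 * ((b:ℝ)-1)) / ((b:ℝ)-1) by
        field_simp; ring]
      rw [le_div_iff₀ hb1R]
      exact hkeyineq
    set e := lb / ((b:ℝ) - 1) with he
    -- q ≤ b^4 * N^e
    have hqle : (q:ℝ) ≤ (b:ℝ)^(4:ℕ) * (N:ℝ) ^ e := by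
      have h0 : (q:ℝ) ≤ (b:ℝ)^(T:ℕ) := by
        have : (q:ℕ) ≤ b ^ T := by omega
        calc (q:ℝ) ≤ ((b^T : ℕ) : ℝ) := by exact_mod_cast this
        _ = (b:ℝ)^(T:ℕ) := by push_cast; ring
      refine h0.trans ?_
      have hbeq : (b:ℝ) = (2:ℝ) ^ lb := (Real.rpow_logb two_pos (by norm_num) hbposR).symm
      have hNeq : (N:ℝ) = (2:ℝ) ^ ln := (Real.rpow_logb two_pos (by norm_num) hNposR).symm
      have e1 : (b:ℝ)^(T:ℕ) = (2:ℝ) ^ (lb * T) := by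
        rw [hbeq, ← Real.rpow_natCast ((2:ℝ)^lb) T, ← Real.rpow_mul (by norm_num)]
      have e2 : (b:ℝ)^(4:ℕ) = (2:ℝ) ^ (lb * 4) := by
        rw [hbeq, ← Real.rpow_natCast ((2:ℝ)^lb) 4, ← Real.rpow_mul (by norm_num)]
        norm_num
      have e3 : (N:ℝ) ^ e = (2:ℝ) ^ (ln * e) := by
        rw [hNeq, ← Real.rpow_mul (by norm_num)]
      rw [e1, e2, e3, ← Real.rpow_add (by norm_num)]
      rw [Real.rpow_le_rpow_left_iff (by norm_num : (1:ℝ) < 2)]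
      have : ln * e = lb * (ln / ((b:ℝ)-1)) := by rw [he]; ring
      rw [this]
      calc lb * (T:ℝ) ≤ lb * (4 + ln / ((b:ℝ)-1)) :=
            mul_le_mul_of_nonneg_left hTle hlbpos.le
      _ = lb * 4 + lb * (ln / ((b:ℝ)-1)) := by ring
    -- conclude
    have hrw : (N:ℝ) ^ (-(lb) / ((b:ℝ) - 1)) = ((N:ℝ) ^ e)⁻¹ := by
      rw [he, neg_div, Real.rpow_neg hNposR.le]
    rw [hrw]
    have hNe : (0:ℝ) < (N:ℝ) ^ e := Real.rpow_pos_of_pos hNposR e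
    have hb4 : (0:ℝ) < (b:ℝ)^(4:ℕ) := by positivity
    rw [show (1 / (b:ℝ)^4) * ((N:ℝ)^e)⁻¹ = ((b:ℝ)^(4:ℕ) * (N:ℝ)^e)⁻¹ by
      rw [mul_inv]; ring]
    exact inv_anti₀ hqR hqle
  -- combine
  calc (1 / (b : ℝ) ^ 4) * (N : ℝ) ^ (-(Real.logb 2 b) / ((b : ℝ) - 1))
      ≤ (q:ℝ)⁻¹ := stepB
    _ ≤ nearestIntDist ((q:ℝ)⁻¹ * (m:ℝ)) := stepA
    _ = nearestIntDist ((q:ℝ)⁻¹ * (f (n-1) : ℝ)) := by rw [hfn]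
end

section
/- Let N be a positive integer, T = ⌈log₂(N+1)⌉ and k = ⌈T/(b−1)⌉ + 1. Then with γ_N = 1/(b^k − 1), for every n with 1 ≤ n ≤ N one has ‖γ_N · b_n‖ ≥ 1/(b^k − 1). -/
namespace ExplicitBA

variable {b : ℕ}

/-- base-`b` digit sum -/
def DS (b n : ℕ) : ℕ := (Nat.digits b n).sum

lemma DS_eq (hb : 2 ≤ b) (n : ℕ) : DS b n = n % b + DS b (n / b) := by
  rcases Nat.eq_zero_or_pos n with h | h
  · simp [DS, h]
  · unfold DS
    rw [Nat.digits_def' (by omega : 1 < b) h]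
    simp

lemma DS_one (hb : 2 ≤ b) : DS b 1 = 1 := by
  rw [DS_eq hb, Nat.mod_eq_of_lt (by omega), Nat.div_eq_of_lt (by omega)]
  simp [DS]

/-- subadditivity of digit sum -/
lemma DS_add_le (hb : 2 ≤ b) : ∀ n x y : ℕ, x + y = n → DS b (x + y) ≤ DS b x + DS b y := by
  intro n
  induction n using Nat.strong_induction_on with
  | _ n IH =>
  intro x y hxy
  rcases Nat.eq_zero_or_pos x with hx | hx
  · simp [hx]
  rcases Nat.eq_zero_or_pos y with hy | hy
  · simp [hy]
  have hb0 : 0 < b := by omega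
  have hdiv : (x + y) / b = x / b + y / b + if b ≤ x % b + y % b then 1 else 0 :=
    Nat.add_div hb0
  have hmod : (x + y) % b = (x % b + y % b) % b := Nat.add_mod x y b
  have hxd : x / b < x := Nat.div_lt_self hx (by omega)
  have hyd : y / b < y := Nat.div_lt_self hy (by omega)
  by_cases hc : b ≤ x % b + y % b
  · -- carry case
    have h1 : DS b (x / b + y / b + 1) ≤ DS b (x / b + y / b) + DS b 1 :=
      IH (x / b + y / b + 1) (by omega) _ _ rfl
    have h2 : DS b (x / b + y / b) ≤ DS b (x / b) + DS b (y / b) :=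
      IH (x / b + y / b) (by omega) _ _ rfl
    have h3 : x % b < b := Nat.mod_lt _ hb0
    have h4 : y % b < b := Nat.mod_lt _ hb0
    have hmb : (x % b + y % b) % b = x % b + y % b - b := by
      rw [Nat.mod_eq_sub_mod hc, Nat.mod_eq_of_lt (by omega)]
    rw [DS_one hb] at h1
    calc DS b (x + y) = (x + y) % b + DS b ((x + y) / b) := DS_eq hb _
      _ = (x % b + y % b - b) + DS b (x / b + y / b + 1) := by
          rw [hmod, hmb, hdiv, if_pos hc]
      _ ≤ (x % b + DS b (x / b)) + (y % b + DS b (y / b)) := by omega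
      _ = DS b x + DS b y := by rw [← DS_eq hb, ← DS_eq hb]
  · have h2 : DS b (x / b + y / b) ≤ DS b (x / b) + DS b (y / b) :=
      IH (x / b + y / b) (by omega) _ _ rfl
    calc DS b (x + y) = (x + y) % b + DS b ((x + y) / b) := DS_eq hb _
      _ = (x % b + y % b) + DS b (x / b + y / b) := by
          rw [hmod, Nat.mod_eq_of_lt (by omega), hdiv, if_neg hc, Nat.add_zero]
      _ ≤ (x % b + DS b (x / b)) + (y % b + DS b (y / b)) := by omega
      _ = DS b x + DS b y := by rw [← DS_eq hb, ← DS_eq hb]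

/-- splitting a number at position `k` -/
lemma DS_split (hb : 2 ≤ b) : ∀ (k q r : ℕ), r < b ^ k → DS b (q * b ^ k + r) = DS b q + DS b r := by
  intro k
  induction k with
  | zero =>
    intro q r hr
    have : r = 0 := by simpa using hr
    simp [this, DS]
  | succ k IH =>
    intro q r hr
    have hb0 : 0 < b := by omega
    have hn : q * b ^ (k + 1) + r = r + b * (q * b ^ k) := by ring
    have hrd : r / b < b ^ k := by
      rw [Nat.div_lt_iff_lt_mul hb0]
      calc r < b ^ (k+1) := hr
        _ = b ^ k * b := by ring
    calc DS b (q * b ^ (k + 1) + r)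
        = (r + b * (q * b ^ k)) % b + DS b ((r + b * (q * b ^ k)) / b) := by
          rw [← hn]; exact DS_eq hb _
      _ = r % b + DS b (q * b ^ k + r / b) := by
          rw [Nat.add_mul_mod_self_left, Nat.add_mul_div_left _ _ hb0,
            Nat.add_comm (r / b) (q * b ^ k)]
      _ = r % b + (DS b q + DS b (r / b)) := by rw [IH q (r / b) hrd]
      _ = DS b q + DS b r := by rw [DS_eq hb r]; ring

lemma DS_pred_pow (hb : 2 ≤ b) : ∀ k : ℕ, DS b (b ^ k - 1) = (b - 1) * k := by
  intro k
  induction k with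
  | zero => simp [DS]
  | succ k IH =>
    have hbk : 1 ≤ b ^ k := Nat.one_le_pow _ _ (by omega)
    have h : b ^ (k + 1) - 1 = (b ^ k - 1) * b ^ 1 + (b - 1) := by
      have h1 : b ^ (k+1) = b ^ k * b := by ring
      have h2 : b ≤ b ^ k * b := Nat.le_mul_of_pos_left b (by omega)
      rw [pow_one, Nat.sub_mul, one_mul]
      omega
    rw [h, DS_split hb 1 _ _ (by rw [pow_one]; omega), IH]
    have : DS b (b - 1) = b - 1 := by
      rw [DS_eq hb, Nat.mod_eq_of_lt (by omega), Nat.div_eq_of_lt (by omega)]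
      simp [DS]
    rw [this]; ring

/-- positive multiples of `b^k - 1` have digit sum at least `(b-1)*k` -/
lemma DS_of_dvd (hb : 2 ≤ b) (k : ℕ) (hk : 1 ≤ k) :
    ∀ m : ℕ, 0 < m → (b ^ k - 1) ∣ m → (b - 1) * k ≤ DS b m := by
  intro m
  induction m using Nat.strong_induction_on with
  | _ m IH =>
  intro hm hdvd
  have hbk : b ^ k ≥ 2 := by
    calc (2:ℕ) ≤ b := hb
      _ = b ^ 1 := (pow_one b).symm
      _ ≤ b ^ k := Nat.pow_le_pow_right (by omega) hk
  by_cases hsmall : m < b ^ k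
  · have h1 : b ^ k - 1 ≤ m := Nat.le_of_dvd hm hdvd
    have h2 : m = b ^ k - 1 := by omega
    rw [h2, DS_pred_pow hb]
  · push_neg at hsmall
    obtain ⟨q, r, hrlt, hm_eq⟩ : ∃ q r, r < b ^ k ∧ m = q * b ^ k + r :=
      ⟨m / b ^ k, m % b ^ k, Nat.mod_lt _ (by omega),
        by rw [Nat.mul_comm]; exact (Nat.div_add_mod m (b^k)).symm⟩
    have hq'' : q ≤ q * b ^ k := Nat.le_mul_of_pos_right q (by omega)
    have hq1 : 1 ≤ q := by
      rcases Nat.eq_zero_or_pos q with h0 | h0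
      · exfalso; rw [h0] at hm_eq; omega
      · exact h0
    have hbq : b ^ k ≤ q * b ^ k := Nat.le_mul_of_pos_left _ hq1
    have h2q : q * 2 ≤ q * b ^ k := Nat.mul_le_mul_left q hbk
    have hqr_lt : q + r < m := by omega
    have hdvd2 : (b ^ k - 1) ∣ (q + r) := by
      have h5 : m = q * (b ^ k - 1) + (q + r) := by
        have hq' : q * (b ^ k - 1) = q * b ^ k - q := by
          rw [Nat.mul_sub, Nat.mul_one]
        omega
      have : q + r = m - q * (b ^ k - 1) := by omega
      rw [this]
      exact Nat.dvd_sub hdvd (dvd_mul_left _ q)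
    have hqr_pos : 0 < q + r := by omega
    calc (b - 1) * k ≤ DS b (q + r) := IH _ hqr_lt hqr_pos hdvd2
      _ ≤ DS b q + DS b r := DS_add_le hb _ q r rfl
      _ = DS b m := by rw [hm_eq, DS_split hb k q r hrlt]


/-- read the binary expansion of `x` in base `b` -/
def phi (b x : ℕ) : ℕ := Nat.ofDigits b (Nat.digits 2 x)

lemma phi_eq (x : ℕ) : phi b x = x % 2 + b * phi b (x / 2) := by
  rcases Nat.eq_zero_or_pos x with h | h
  · simp [phi, h]
  · unfold phi
    rw [Nat.digits_def' (by norm_num : 1 < 2) h, Nat.ofDigits_cons]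

lemma phi_strictMono (hb : 2 ≤ b) : StrictMono (phi b) := by
  intro x y hxy
  induction y using Nat.strong_induction_on generalizing x with
  | _ y IH =>
  have hy : 0 < y := by omega
  have hd : x / 2 ≤ y / 2 := Nat.div_le_div_right (le_of_lt hxy)
  rcases lt_or_eq_of_le hd with h | h
  · have h1 : phi b (x / 2) < phi b (y / 2) := IH (y / 2) (Nat.div_lt_self hy one_lt_two) h
    have h2 : b * phi b (x / 2) + b ≤ b * phi b (y / 2) := by
      have := Nat.mul_le_mul_left b h1
      rwa [Nat.succ_eq_add_one, Nat.mul_add, Nat.mul_one] at this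
    have h3 := phi_eq (b := b) x
    have h4 := phi_eq (b := b) y
    have h5 : x % 2 ≤ 1 := by omega
    omega
  · have h6 : x % 2 < y % 2 := by omega
    have h3 := phi_eq (b := b) x
    have h4 := phi_eq (b := b) y
    rw [h] at h3
    omega

lemma digits_phi (hb : 2 ≤ b) {x : ℕ} (hx : x ≠ 0) :
    Nat.digits b (phi b x) = Nat.digits 2 x := by
  refine Nat.digits_ofDigits b (by omega) _ (fun l hl => ?_) (fun h => ?_)
  · exact lt_of_lt_of_le (Nat.digits_lt_base (by norm_num) hl) hb
  · exact Nat.getLast_digit_ne_zero 2 hx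

lemma phi_mem (hb : 2 ≤ b) {x : ℕ} (hx : x ≠ 0) : InDb b (phi b x) := by
  constructor
  · intro h0
    have := digits_phi hb hx
    rw [h0] at this
    simp only [Nat.digits_zero] at this
    exact (Nat.digits_ne_nil_iff_ne_zero.mpr hx) this.symm
  · intro d hd
    rw [digits_phi hb hx] at hd
    exact Nat.lt_succ_iff.mp (Nat.digits_lt_base (by norm_num) hd)

lemma phi_surj (hb : 2 ≤ b) {m : ℕ} (hm : InDb b m) : ∃ x, x ≠ 0 ∧ phi b x = m := by
  obtain ⟨hm0, hmd⟩ := hm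
  refine ⟨Nat.ofDigits 2 (Nat.digits b m), ?_, ?_⟩
  · intro h0
    have h1 : Nat.digits 2 (Nat.ofDigits 2 (Nat.digits b m)) = Nat.digits b m :=
      Nat.digits_ofDigits 2 (by norm_num) _
        (fun l hl => Nat.lt_succ_iff.mpr (hmd l hl))
        (fun _ => Nat.getLast_digit_ne_zero b hm0)
    rw [h0] at h1
    simp only [Nat.digits_zero] at h1
    exact (Nat.digits_ne_nil_iff_ne_zero.mpr hm0) h1.symm
  · unfold phi
    rw [Nat.digits_ofDigits 2 (by norm_num) _
        (fun l hl => Nat.lt_succ_iff.mpr (hmd l hl))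
        (fun _ => Nat.getLast_digit_ne_zero b hm0)]
    exact Nat.ofDigits_digits b m

lemma f_eq_phi (hb : 2 ≤ b) (f : ℕ → ℕ) (hf : StrictMono f)
    (hrange : Set.range f = {n | InDb b n}) : ∀ j, f j = phi b (j + 1) := by
  have hpsi : StrictMono (fun j => phi b (j + 1)) :=
    fun x y h => phi_strictMono hb (by omega)
  have hr2 : Set.range (fun j => phi b (j + 1)) = {n | InDb b n} := by
    ext m
    constructor
    · rintro ⟨j, rfl⟩
      exact phi_mem hb (by omega)
    · intro hm
      obtain ⟨x, hx0, hx⟩ := phi_surj hb hm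
      exact ⟨x - 1, by simpa [Nat.sub_add_cancel (by omega : 1 ≤ x)] using hx⟩
  have := (StrictMono.range_inj hf hpsi).mp (hrange.trans hr2.symm)
  exact fun j => congrFun this j

end ExplicitBA

/-- With `T = ⌈log₂(N+1)⌉`, `k = ⌈T/(b-1)⌉ + 1` and `γ_N = 1/(b^k - 1)`, one has
`‖γ_N b_n‖ ≥ 1/(b^k - 1)` for all `1 ≤ n ≤ N`, where `b_m = f (m-1)` enumerates
`D_b` in increasing order. -/
theorem explicit_badly_approximable (b : ℕ) (hb : 2 ≤ b)
    (f : ℕ → ℕ) (hf : StrictMono f) (hrange : Set.range f = {n | InDb b n})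
    (N : ℕ) (hN : 1 ≤ N) (T k : ℕ)
    (hT : (T : ℤ) = ⌈Real.logb 2 ((N : ℝ) + 1)⌉)
    (hk : (k : ℤ) = ⌈(T : ℝ) / ((b : ℝ) - 1)⌉ + 1) :
    ∀ n : ℕ, 1 ≤ n → n ≤ N →
      1 / ((b : ℝ) ^ k - 1)
        ≤ nearestIntDist ((1 / ((b : ℝ) ^ k - 1)) * (f (n - 1) : ℝ)) := by
  intro n hn1 hnN
  have hn0 : n ≠ 0 := by omega
  have hbR : (1:ℝ) ≤ (b:ℝ) - 1 := by
    have : (2:ℝ) ≤ (b:ℝ) := by exact_mod_cast hb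
    linarith
  -- k ≥ 1
  have hk1 : 1 ≤ k := by
    have h0 : (0:ℤ) ≤ ⌈(T : ℝ) / ((b : ℝ) - 1)⌉ :=
      Int.ceil_nonneg (div_nonneg (Nat.cast_nonneg T) (by linarith))
    have : (1:ℤ) ≤ (k:ℤ) := by omega
    exact_mod_cast this
  have hbk2 : 2 ≤ b ^ k := by
    calc (2:ℕ) ≤ b := hb
      _ = b ^ 1 := (pow_one b).symm
      _ ≤ b ^ k := Nat.pow_le_pow_right (by omega) hk1
  -- T ≤ (b-1)*(k-1)
  have hTk : T ≤ (b - 1) * (k - 1) := by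
    have hceil : (T:ℝ)/((b:ℝ)-1) ≤ (k:ℝ) - 1 := by
      have h1 := Int.le_ceil ((T : ℝ) / ((b : ℝ) - 1))
      have h2 : ((⌈(T : ℝ) / ((b : ℝ) - 1)⌉ : ℤ) : ℝ) = (k:ℝ) - 1 := by
        have : (⌈(T : ℝ) / ((b : ℝ) - 1)⌉ : ℤ) = (k:ℤ) - 1 := by omega
        rw [this]; push_cast; ring
      linarith [h2 ▸ h1]
    have hTreal : (T:ℝ) ≤ ((k:ℝ) - 1) * ((b:ℝ) - 1) := by
      rw [div_le_iff₀ (by linarith : (0:ℝ) < (b:ℝ) - 1)] at hceil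
      linarith
    have hcast : (((b - 1) * (k - 1) : ℕ) : ℝ) = ((b:ℝ) - 1) * ((k:ℝ) - 1) := by
      push_cast [Nat.cast_sub (by omega : 1 ≤ b), Nat.cast_sub hk1]
      ring
    have : (T:ℝ) ≤ (((b - 1) * (k - 1) : ℕ) : ℝ) := by rw [hcast]; linarith
    exact_mod_cast this
  -- N < 2^T
  have hNT : n < 2 ^ T := by
    have hlogb : Real.logb 2 ((N:ℝ)+1) ≤ (T:ℝ) := by
      have h1 := Int.le_ceil (Real.logb 2 ((N : ℝ) + 1))
      rw [← hT] at h1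
      exact_mod_cast h1
    have hN2T : (N:ℝ) + 1 ≤ (2:ℝ) ^ (T:ℕ) := by
      have h := (Real.logb_le_iff_le_rpow (by norm_num) (by positivity)).mp hlogb
      rwa [Real.rpow_natCast] at h
    have : N + 1 ≤ 2 ^ T := by exact_mod_cast hN2T
    omega
  -- identify f (n-1)
  have hfn : f (n - 1) = ExplicitBA.phi b n := by
    rw [ExplicitBA.f_eq_phi hb f hf hrange, Nat.sub_add_cancel hn1]
  set m := ExplicitBA.phi b n with hm
  have hm0 : m ≠ 0 := (ExplicitBA.phi_mem hb hn0).1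
  -- digit sum bound
  have hDS : ExplicitBA.DS b m ≤ T := by
    have hd : Nat.digits b m = Nat.digits 2 n := ExplicitBA.digits_phi hb hn0
    have hsum : (Nat.digits 2 n).sum ≤ (Nat.digits 2 n).length • 1 :=
      List.sum_le_card_nsmul _ 1 (fun x hx =>
        Nat.lt_succ_iff.mp (Nat.digits_lt_base (by norm_num) hx))
    have hlen : (Nat.digits 2 n).length ≤ T := by
      rw [Nat.digits_len 2 n (by norm_num) hn0]
      have := Nat.log_lt_of_lt_pow hn0 hNT
      omega
    unfold ExplicitBA.DS
    rw [hd]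
    simpa using le_trans hsum (by simpa using hlen)
  -- non-divisibility
  have hndvd : ¬ (b ^ k - 1) ∣ m := by
    intro hdvd
    have h1 := ExplicitBA.DS_of_dvd hb k hk1 m (Nat.pos_of_ne_zero hm0) hdvd
    have h2 : (b - 1) * (k - 1) + (b - 1) = (b - 1) * k := by
      rw [← Nat.mul_succ]
      congr 1
      omega
    omega
  -- real part
  have hQcast : (((b ^ k - 1 : ℕ)) : ℝ) = (b:ℝ) ^ k - 1 := by
    push_cast [Nat.cast_sub (by omega : 1 ≤ b ^ k)]
    ring
  set c : ℝ := (b:ℝ) ^ k - 1 with hc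
  have hcpos : (0:ℝ) < c := by
    rw [← hQcast]
    exact_mod_cast (by omega : 0 < b ^ k - 1)
  rw [hfn]
  unfold nearestIntDist
  set z := round (1 / c * (m:ℝ)) with hz
  have hznz : ((m:ℤ) - z * ((b ^ k - 1 : ℕ) : ℤ)) ≠ 0 := by
    intro h0
    apply hndvd
    have hdz : ((b ^ k - 1 : ℕ) : ℤ) ∣ (m : ℤ) := ⟨z, by have := mul_comm z ((b ^ k - 1 : ℕ) : ℤ); omega⟩
    exact_mod_cast hdz
  have habs : (1:ℝ) ≤ |(((m:ℤ) - z * ((b ^ k - 1 : ℕ) : ℤ)) : ℝ)| := by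
    have := Int.one_le_abs hznz
    calc (1:ℝ) = ((1:ℤ):ℝ) := by norm_cast
      _ ≤ ((|(m:ℤ) - z * ((b ^ k - 1 : ℕ) : ℤ)| : ℤ) : ℝ) := by exact_mod_cast this
      _ = |(((m:ℤ) - z * ((b ^ k - 1 : ℕ) : ℤ)) : ℝ)| := by push_cast; rfl
  have hkey : 1 / c * (m:ℝ) - (z:ℝ) = (((m:ℤ) - z * ((b ^ k - 1 : ℕ) : ℤ)) : ℝ) / c := by
    have hcne : c ≠ 0 := ne_of_gt hcpos
    field_simp
    push_cast [hQcast]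
    ring
  rw [hkey]
  rw [abs_div, abs_of_pos hcpos]
  rw [div_le_div_iff₀ hcpos hcpos]
  nlinarith [habs, hcpos]
end

section
/- For every real γ and every integer N ≥ 2, there exists n ∈ D_b with 1 ≤ n ≤ N such that ‖γn‖ ≤ A_b / log N, where A_b is a constant depending only on b. -/
/-- Repunit with `k` ones in base `b`. -/
def repu (b k : ℕ) : ℕ := ∑ s ∈ Finset.range k, b ^ s

lemma repu_succ (b k : ℕ) : repu b (k + 1) = 1 + b * repu b k := by
  unfold repu
  rw [Finset.sum_range_succ']
  simp [pow_succ, Finset.mul_sum, mul_comm, add_comm]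

lemma repu_add (b i m : ℕ) : repu b (i + m) = repu b i + b ^ i * repu b m := by
  induction m with
  | zero => simp [repu]
  | succ m ih =>
      rw [← add_assoc]
      unfold repu at *
      rw [Finset.sum_range_succ, ih, Finset.sum_range_succ]
      ring

lemma repu_pos (b k : ℕ) (hk : 1 ≤ k) : 1 ≤ repu b k := by
  obtain ⟨m, rfl⟩ := Nat.exists_eq_add_of_le hk
  rw [add_comm, repu_succ]; omega

lemma repu_lt_pow (b K : ℕ) (hb : 2 ≤ b) : repu b K < b ^ K := by
  induction K with
  | zero => simp [repu]
  | succ K ih =>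
      rw [repu_succ, pow_succ]
      have : b * (repu b K + 1) ≤ b * b ^ K := Nat.mul_le_mul_left b ih
      nlinarith

lemma digits_repu (b : ℕ) (hb : 2 ≤ b) :
    ∀ k, ∀ d ∈ Nat.digits b (repu b k), d ≤ 1 := by
  intro k
  induction k with
  | zero => simp [repu]
  | succ k ih =>
      intro d hd
      rw [repu_succ, Nat.digits_def' (by omega : 1 < b) (by omega)] at hd
      rcases List.mem_cons.mp hd with h | h
      · subst h
        rw [Nat.add_mul_mod_self_left, Nat.mod_eq_of_lt (by omega)]
      · have h2 : (1 + b * repu b k) / b = repu b k := by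
          rw [Nat.add_mul_div_left _ _ (by omega : 0 < b),
            Nat.div_eq_of_lt (by omega)]
          omega
        rw [h2] at h
        exact ih d h

lemma digits_pow_mul_repu (b : ℕ) (hb : 2 ≤ b) (i : ℕ) :
    ∀ k, ∀ d ∈ Nat.digits b (b ^ i * repu b k), d ≤ 1 := by
  induction i with
  | zero => simpa using digits_repu b hb
  | succ i ih =>
      intro k d hd
      rcases Nat.eq_zero_or_pos (repu b k) with h0 | h0
      · simp [h0] at hd
      · rw [Nat.digits_def' (by omega : 1 < b)
          (by positivity)] at hd
        rcases List.mem_cons.mp hd with h | h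
        · subst h
          rw [pow_succ, mul_comm (b ^ i) b, mul_assoc, Nat.mul_mod_right]
          omega
        · have h2 : b ^ (i + 1) * repu b k / b = b ^ i * repu b k := by
            rw [pow_succ, mul_comm (b ^ i) b, mul_assoc,
              Nat.mul_div_cancel_left _ (by omega : 0 < b)]
          rw [h2] at h
          exact ih k d h

lemma nearestIntDist_sub_le (x y : ℝ) :
    nearestIntDist (x - y) ≤ |Int.fract x - Int.fract y| := by
  have h := round_le (x - y) (⌊x⌋ - ⌊y⌋)
  unfold nearestIntDist
  refine h.trans_eq ?_
  congr 1
  unfold Int.fract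
  push_cast
  ring

theorem elementary_approximation (b : ℕ) (hb : 2 ≤ b) :
    ∃ A : ℝ, 0 < A ∧ ∀ γ : ℝ, ∀ N : ℕ, 2 ≤ N →
      ∃ n : ℕ, InDb b n ∧ 1 ≤ n ∧ n ≤ N ∧
        nearestIntDist (γ * (n : ℝ)) ≤ A / Real.log N := by
  have hb1 : (1 : ℝ) < b := by exact_mod_cast hb
  have hlogb : 0 < Real.log b := Real.log_pos hb1
  refine ⟨2 * Real.log b, by positivity, ?_⟩
  intro γ N hN
  have hNlog : 0 < Real.log N := Real.log_pos (by exact_mod_cast hN)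
  set K := Nat.log b N with hK
  rcases Nat.eq_zero_or_pos K with hK0 | hKpos
  · -- N < b; use n = 1
    refine ⟨1, ⟨one_ne_zero, ?_⟩, le_refl 1, by omega, ?_⟩
    · intro d hd
      rw [Nat.digits_def' (by omega : 1 < b) one_pos] at hd
      simp [Nat.mod_eq_of_lt (by omega : 1 < b),
        Nat.div_eq_of_lt (by omega : 1 < b)] at hd
      omega
    · have hNb : N < b := by
        by_contra h
        have := Nat.log_pos (by omega : 1 < b) (by omega : b ≤ N)
        omega
      have hlogN_le : Real.log N ≤ Real.log b :=
        Real.log_le_log (by positivity) (by exact_mod_cast hNb.le)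
      have h12 : nearestIntDist (γ * (1 : ℕ)) ≤ 1 / 2 := by
        unfold nearestIntDist
        simpa using abs_sub_round (γ * (1 : ℕ))
      refine h12.trans ?_
      rw [div_le_div_iff₀ (by norm_num) hNlog]
      nlinarith
  · -- main case: pigeonhole on repunits
    have hKR : (0 : ℝ) < K := by exact_mod_cast hKpos
    -- pigeonhole
    have hcard : (Finset.range K).card < (Finset.range (K + 1)).card := by
      simp
    have hmaps : ∀ t ∈ Finset.range (K + 1),
        (⌊(K : ℝ) * Int.fract (γ * repu b t)⌋).toNat ∈ Finset.range K := by
      intro t _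
      have h0 : 0 ≤ Int.fract (γ * repu b t) := Int.fract_nonneg _
      have h1 : Int.fract (γ * repu b t) < 1 := Int.fract_lt_one _
      have : (K : ℝ) * Int.fract (γ * repu b t) < K := by nlinarith
      have hfl : ⌊(K : ℝ) * Int.fract (γ * repu b t)⌋ < (K : ℤ) := by
        exact Int.floor_lt.mpr (by exact_mod_cast this)
      simp only [Finset.mem_range]
      omega
    obtain ⟨i, hi, j, hj, hij, hfij⟩ :=
      Finset.exists_ne_map_eq_of_card_lt_of_maps_to hcard hmaps
    -- wlog i < j
    wlog hij' : i < j generalizing i j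
    · exact this j hj i hi hij.symm hfij.symm (by omega)
    have hfloor_nonneg : ∀ t, (0:ℤ) ≤ ⌊(K : ℝ) * Int.fract (γ * repu b t)⌋ := by
      intro t
      exact Int.floor_nonneg.mpr (mul_nonneg (by positivity) (Int.fract_nonneg _))
    have hfleq : ⌊(K : ℝ) * Int.fract (γ * repu b i)⌋
        = ⌊(K : ℝ) * Int.fract (γ * repu b j)⌋ := by
      have := hfloor_nonneg i
      have := hfloor_nonneg j
      omega
    have habs : |(K : ℝ) * Int.fract (γ * repu b i)
        - (K : ℝ) * Int.fract (γ * repu b j)| < 1 :=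
      Int.abs_sub_lt_one_of_floor_eq_floor hfleq
    have hfr : |Int.fract (γ * repu b j) - Int.fract (γ * repu b i)| < 1 / K := by
      rw [abs_sub_comm, ← mul_sub, abs_mul, abs_of_pos hKR] at habs
      rw [lt_div_iff₀ hKR, mul_comm]
      exact habs
    -- the number n
    set n := b ^ i * repu b (j - i) with hn
    have hji : 1 ≤ j - i := by omega
    have hsplit : repu b j = repu b i + n := by
      rw [hn, ← repu_add]
      congr 1
      omega
    have hn1 : 1 ≤ n := by
      have := repu_pos b (j - i) hji
      have hbp : 1 ≤ b ^ i := Nat.one_le_pow _ _ (by omega)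
      calc 1 = 1 * 1 := by ring
      _ ≤ b ^ i * repu b (j - i) := Nat.mul_le_mul hbp this
    have hnN : n ≤ N := by
      have h1 : n ≤ repu b j := by omega
      have hjK : j ≤ K := by simp only [Finset.mem_range] at hj; omega
      have h2 : repu b j ≤ repu b K := by
        obtain ⟨m, hm⟩ := Nat.exists_eq_add_of_le hjK
        rw [hm, repu_add]; omega
      have h4 : repu b K < b ^ K := repu_lt_pow b K hb
      have h5 : b ^ K ≤ N := Nat.pow_log_le_self b (by omega)
      omega
    refine ⟨n, ⟨by omega, digits_pow_mul_repu b hb i (j - i)⟩, hn1, hnN, ?_⟩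
    have hcast : (γ * n : ℝ) = γ * repu b j - γ * repu b i := by
      have : (repu b j : ℝ) = repu b i + n := by exact_mod_cast hsplit
      rw [this]; ring
    have hd : nearestIntDist (γ * n) < 1 / K := by
      rw [hcast]
      exact lt_of_le_of_lt (nearestIntDist_sub_le _ _) hfr
    refine hd.le.trans ?_
    -- 1/K ≤ 2 log b / log N since log N < (K+1) log b ≤ 2 K log b
    have hNlt : N < b ^ (K + 1) := Nat.lt_pow_succ_log_self (by omega) N
    have hlogNlt : Real.log N < (K + 1) * Real.log b := by
      calc Real.log N < Real.log (b ^ (K + 1)) :=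
            Real.log_lt_log (by positivity) (by exact_mod_cast hNlt)
      _ = (K + 1) * Real.log b := by
            rw [← Real.rpow_natCast (b:ℝ) (K+1), Real.log_rpow (by positivity)]
            push_cast; ring
    rw [div_le_div_iff₀ hKR hNlog]
    have : ((K : ℝ) + 1) ≤ 2 * K := by
      have : (1 : ℝ) ≤ K := by exact_mod_cast hKpos
      linarith
    nlinarith [hlogNlt, hlogb]
end

section
/- Let t be the largest integer with 1 + b + ⋯ + b^t ≤ N and let P = {1 + b + ⋯ + b^d : 0 ≤ d ≤ t} be the set of repunits in base b up to N. Then for every real γ there exists n ∈ D_b with 1 ≤ n ≤ N and ‖γn‖ ≤ 1/(t+1). -/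
lemma repunit_digits (b : ℕ) (hb : 2 ≤ b) (m : ℕ) :
    Nat.digits b (∑ j ∈ Finset.range m, b ^ j) = List.replicate m 1 := by
  induction m with
  | zero => simp
  | succ m ih =>
    have hb1 : 1 < b := hb
    have hsum : (∑ j ∈ Finset.range (m + 1), b ^ j) =
        b * (∑ j ∈ Finset.range m, b ^ j) + 1 := by
      rw [Finset.sum_range_succ']
      simp [pow_succ, Finset.mul_sum, mul_comm]
    have hpos : 0 < ∑ j ∈ Finset.range (m + 1), b ^ j := by
      rw [hsum]; omega
    rw [Nat.digits_def' hb1 hpos, hsum]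
    have hb0 : 0 < b := by omega
    have h1 : (b * (∑ j ∈ Finset.range m, b ^ j) + 1) % b = 1 := by
      rw [Nat.mul_add_mod]
      exact Nat.mod_eq_of_lt hb1
    have h2 : (b * (∑ j ∈ Finset.range m, b ^ j) + 1) / b =
        ∑ j ∈ Finset.range m, b ^ j := by
      rw [Nat.mul_add_div hb0]
      simp [Nat.div_eq_of_lt hb1]
    rw [h1, h2, ih, List.replicate_succ]

/-- If `t` is the largest integer with `1 + b + ⋯ + b^t ≤ N`, then for every
real `γ` there is `n ∈ D_b` with `1 ≤ n ≤ N` and `‖γn‖ ≤ 1/(t+1)`. -/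
theorem repunit_pigeonhole (b : ℕ) (hb : 2 ≤ b) (N : ℕ) (hN : 1 ≤ N) (t : ℕ)
    (ht : (∑ j ∈ Finset.range (t + 1), b ^ j) ≤ N)
    (ht' : N < ∑ j ∈ Finset.range (t + 2), b ^ j) (γ : ℝ) :
    ∃ n : ℕ, InDb b n ∧ 1 ≤ n ∧ n ≤ N ∧
      nearestIntDist (γ * (n : ℝ)) ≤ 1 / ((t : ℝ) + 1) := by
  set S : ℕ → ℕ := fun m => ∑ j ∈ Finset.range m, b ^ j with hS
  have hSmono : StrictMono S := by
    intro a c hac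
    exact Finset.sum_lt_sum_of_subset (Finset.range_subset_range.mpr hac.le)
      (Finset.mem_range.mpr hac) (by simp) (by positivity) (fun k _ _ => Nat.zero_le _)
  have htpos : (0 : ℝ) < (t : ℝ) + 1 := by positivity
  -- the pigeonhole map
  set f : ℕ → ℕ := fun m => (⌊((t : ℝ) + 1) * Int.fract (γ * (S m : ℝ))⌋).toNat with hf
  have hmaps : ∀ m ∈ Finset.range (t + 2), f m ∈ Finset.range (t + 1) := by
    intro m _
    have h0 : (0:ℝ) ≤ Int.fract (γ * (S m : ℝ)) := Int.fract_nonneg _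
    have h1 : Int.fract (γ * (S m : ℝ)) < 1 := Int.fract_lt_one _
    have hlt : ((t : ℝ) + 1) * Int.fract (γ * (S m : ℝ)) < (t : ℝ) + 1 := by
      nlinarith
    have : ⌊((t : ℝ) + 1) * Int.fract (γ * (S m : ℝ))⌋ < (t : ℤ) + 1 := by
      apply Int.floor_lt.mpr
      push_cast
      linarith
    have hnn : (0:ℤ) ≤ ⌊((t : ℝ) + 1) * Int.fract (γ * (S m : ℝ))⌋ :=
      Int.floor_nonneg.mpr (mul_nonneg (by positivity) h0)
    simp only [hf, Finset.mem_range]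
    omega
  obtain ⟨i, hi, j, hj, hij, hfij⟩ :=
    Finset.exists_ne_map_eq_of_card_lt_of_maps_to
      (by simp : (Finset.range (t + 1)).card < (Finset.range (t + 2)).card) hmaps
  simp only [Finset.mem_range] at hi hj
  -- wlog i < j
  wlog hlt : i < j generalizing i j
  · exact this j i hij.symm hfij.symm hj hi (by omega)
  -- the candidate n
  refine ⟨S j - S i, ?_, ?_, ?_, ?_⟩
  · constructor
    · have := hSmono hlt; omega
    · have hrw : S j - S i = b ^ i * ∑ k ∈ Finset.range (j - i), b ^ k := by
        have hIco : S i + ∑ k ∈ Finset.Ico i j, b ^ k = S j :=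
          Finset.sum_range_add_sum_Ico _ hlt.le
        have h2 : S j - S i = ∑ k ∈ Finset.Ico i j, b ^ k := by omega
        rw [h2, Finset.sum_Ico_eq_sum_range, Finset.mul_sum]
        exact Finset.sum_congr rfl fun k _ => by rw [← pow_add]
      intro d hd
      rw [hrw] at hd
      have hpos : 0 < ∑ k ∈ Finset.range (j - i), b ^ k := by
        have h1 : 1 ≤ j - i := by omega
        calc 0 < ∑ k ∈ Finset.range 1, b ^ k := by simp
          _ ≤ _ := Finset.sum_le_sum_of_subset (Finset.range_subset_range.mpr h1)
      rw [Nat.digits_base_pow_mul hb hpos, repunit_digits b hb] at hd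
      rcases List.mem_append.mp hd with h | h
      · simp [List.eq_of_mem_replicate h]
      · simp [List.eq_of_mem_replicate h]
  · have := hSmono hlt; omega
  · have h1 : S j ≤ S (t + 1) := hSmono.monotone (by omega)
    have h2 : S (t + 1) ≤ N := ht
    omega
  · -- the approximation estimate
    have hcast : ((S j - S i : ℕ) : ℝ) = (S j : ℝ) - (S i : ℝ) := by
      have := hSmono hlt
      push_cast [Nat.cast_sub this.le]
      ring
    set yi := γ * (S i : ℝ) with hyi
    set yj := γ * (S j : ℝ) with hyj
    have hfloor : ⌊((t : ℝ) + 1) * Int.fract yi⌋ = ⌊((t : ℝ) + 1) * Int.fract yj⌋ := by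
      have hnn : ∀ y : ℝ, 0 ≤ ⌊((t : ℝ) + 1) * Int.fract y⌋ := fun y =>
        Int.floor_nonneg.mpr (mul_nonneg (by positivity) (Int.fract_nonneg _))
      have h := hfij
      simp only [hf] at h
      rw [← hyi, ← hyj] at h
      have a1 := hnn yi
      have a2 := hnn yj
      omega
    have hkey : |Int.fract yj - Int.fract yi| < 1 / ((t : ℝ) + 1) := by
      rw [abs_sub_lt_iff]
      constructor
      · rw [sub_lt_iff_lt_add, div_add' _ _ _ (ne_of_gt htpos), lt_div_iff₀ htpos]
        have h1 := Int.sub_one_lt_floor (((t : ℝ) + 1) * Int.fract yj)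
        have h2 := Int.floor_le (((t : ℝ) + 1) * Int.fract yi)
        rw [← hfloor] at h1
        nlinarith
      · rw [sub_lt_iff_lt_add, div_add' _ _ _ (ne_of_gt htpos), lt_div_iff₀ htpos]
        have h1 := Int.sub_one_lt_floor (((t : ℝ) + 1) * Int.fract yi)
        have h2 := Int.floor_le (((t : ℝ) + 1) * Int.fract yj)
        rw [hfloor] at h1
        nlinarith
    have hval : γ * ((S j - S i : ℕ) : ℝ) - ((⌊yj⌋ - ⌊yi⌋ : ℤ) : ℝ) =
        Int.fract yj - Int.fract yi := by
      rw [hcast]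
      push_cast
      rw [Int.fract, Int.fract]
      ring
    calc nearestIntDist (γ * ((S j - S i : ℕ) : ℝ))
        ≤ |γ * ((S j - S i : ℕ) : ℝ) - ((⌊yj⌋ - ⌊yi⌋ : ℤ) : ℝ)| :=
          round_le _ _
      _ = |Int.fract yj - Int.fract yi| := by rw [hval]
      _ ≤ 1 / ((t : ℝ) + 1) := hkey.le
end

section
/- Let b ≥ 3 and N ≥ 1. If A ⊆ ℤ is a finite set such that every positive difference of two elements of A lies in D_b ∩ [1, N], then #A ≤ ⌊log_b N⌋ + 2. -/
/-- digit sum -/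
def ds (b n : ℕ) : ℕ := (Nat.digits b n).sum

lemma ds_pos {b n : ℕ} (hb : 2 ≤ b) (hn : n ≠ 0) : 1 ≤ ds b n := by
  induction n using Nat.strong_induction_on with
  | _ n ih =>
    rw [ds, Nat.digits_def' (by omega : 1 < b) (Nat.pos_of_ne_zero hn), List.sum_cons]
    rcases Nat.eq_zero_or_pos (n % b) with h | h
    · have hd : n / b ≠ 0 := by
        intro h0
        have h2 := Nat.div_add_mod n b
        rw [h0, Nat.mul_zero] at h2
        omega
      have := ih (n / b) (Nat.div_lt_self (Nat.pos_of_ne_zero hn) (by omega)) hd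
      rw [ds] at this; omega
    · omega

lemma digits_tail {b n : ℕ} (hb : 2 ≤ b) (hn : n ≠ 0)
    (h : ∀ d ∈ Nat.digits b n, d ≤ 1) :
    n % b ≤ 1 ∧ (∀ d ∈ Nat.digits b (n / b), d ≤ 1) ∧ ds b n = n % b + ds b (n / b) := by
  have hdig := Nat.digits_def' (by omega : 1 < b) (Nat.pos_of_ne_zero hn)
  rw [hdig] at h
  refine ⟨h _ List.mem_cons_self, fun d hd => h d (List.mem_cons_of_mem _ hd), ?_⟩
  rw [ds, ds, hdig, List.sum_cons]

lemma ds_add {b : ℕ} (hb : 3 ≤ b) : ∀ m n : ℕ,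
    (∀ d ∈ Nat.digits b m, d ≤ 1) → (∀ d ∈ Nat.digits b n, d ≤ 1) →
    (∀ d ∈ Nat.digits b (m + n), d ≤ 1) →
    ds b (m + n) = ds b m + ds b n := by
  have key : ∀ k, ∀ m n : ℕ, m + n ≤ k →
      (∀ d ∈ Nat.digits b m, d ≤ 1) → (∀ d ∈ Nat.digits b n, d ≤ 1) →
      (∀ d ∈ Nat.digits b (m + n), d ≤ 1) →
      ds b (m + n) = ds b m + ds b n := by
    intro k
    induction k with
    | zero =>
      intro m n hmn _ _ _
      have hmn' : m = 0 ∧ n = 0 := by omega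
      obtain ⟨rfl, rfl⟩ := hmn'
      simp [ds]
    | succ k ih =>
      intro m n hmn hm hn hs
      rcases Nat.eq_zero_or_pos m with rfl | hm0
      · simp [ds, Nat.digits_zero]
      rcases Nat.eq_zero_or_pos n with rfl | hn0
      · simp [ds, Nat.digits_zero]
      obtain ⟨hm1, hm2, hm3⟩ := digits_tail (by omega) (by omega) hm
      obtain ⟨hn1, hn2, hn3⟩ := digits_tail (by omega) (by omega) hn
      obtain ⟨hs1, hs2, hs3⟩ := digits_tail (by omega) (by omega : m + n ≠ 0) hs
      have hmod : (m + n) % b = m % b + n % b := by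
        conv_lhs => rw [Nat.add_mod]
        exact Nat.mod_eq_of_lt (by omega)
      have hdiv : (m + n) / b = m / b + n / b := by
        rw [Nat.add_div (by omega : 0 < b), if_neg (by omega), Nat.add_zero]
      rw [hdiv] at hs2 hs3
      have hlt : m / b + n / b ≤ k := by
        have h1 : m / b < m := Nat.div_lt_self hm0 (by omega)
        have h2 : n / b < n := Nat.div_lt_self hn0 (by omega)
        omega
      have := ih (m / b) (n / b) hlt hm2 hn2 hs2
      omega
  intro m n hm hn hs
  exact key (m + n) m n le_rfl hm hn hs

lemma ds_le_log {b n N : ℕ} (hb : 2 ≤ b) (hn : n ≠ 0) (hN : n ≤ N)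
    (h : ∀ d ∈ Nat.digits b n, d ≤ 1) : ds b n ≤ Nat.log b N + 1 := by
  have hlen : (Nat.digits b n).length = Nat.log b n + 1 :=
    Nat.digits_len b n (by omega) hn
  have hsum : ds b n ≤ (Nat.digits b n).length := by
    rw [ds]
    calc (Nat.digits b n).sum ≤ (Nat.digits b n).length • 1 :=
          List.sum_le_card_nsmul _ 1 h
      _ = (Nat.digits b n).length := by simp
  have := Nat.log_mono_right (b := b) hN
  omega

/-- If every positive difference of two elements of a finite set `A ⊆ ℤ`
lies in `D_b ∩ [1, N]` (with `b ≥ 3`), then `#A ≤ ⌊log_b N⌋ + 2`. -/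
theorem difference_set_card_bound (b : ℕ) (hb : 3 ≤ b) (N : ℕ) (hN : 1 ≤ N)
    (A : Finset ℤ)
    (hA : ∀ x ∈ A, ∀ y ∈ A, x < y →
      ∃ m : ℕ, (y - x : ℤ) = (m : ℤ) ∧ InDb b m ∧ 1 ≤ m ∧ m ≤ N) :
    (A.card : ℤ) ≤ ⌊Real.logb b N⌋ + 2 := by
  have hfloor : ⌊Real.logb b N⌋ = (Nat.log b N : ℤ) := by
    rw [Real.floor_logb_natCast (by positivity), Int.log_natCast]
  rw [hfloor]
  rcases A.eq_empty_or_nonempty with rfl | hne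
  · simp; positivity
  set a₀ := A.min' hne with ha₀
  have ha₀A : a₀ ∈ A := A.min'_mem hne
  set L := Nat.log b N + 1 with hL
  -- the digit sum of a - a₀ for a in A.erase a₀
  have key : ∀ a ∈ A.erase a₀, ∃ m : ℕ, (a - a₀ : ℤ) = m ∧ InDb b m ∧ 1 ≤ m ∧ m ≤ N := by
    intro a ha
    obtain ⟨haa, haA⟩ := Finset.mem_erase.mp ha
    exact hA a₀ ha₀A a haA (lt_of_le_of_ne (A.min'_le a haA) (Ne.symm haa))
  have hinj : Set.InjOn (fun a : ℤ => ds b (a - a₀).toNat) (A.erase a₀) := by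
    have hmono : ∀ x ∈ A.erase a₀, ∀ y ∈ A.erase a₀, x < y →
        ds b (x - a₀).toNat < ds b (y - a₀).toNat := by
      intro x hx y hy hxy
      obtain ⟨m₁, he₁, hD₁, hm₁, _⟩ := key x hx
      obtain ⟨m₂, he₂, hD₂, hm₂, _⟩ := key y hy
      obtain ⟨d, hed, hDd, hd1, _⟩ := hA x (Finset.mem_of_mem_erase hx) y
        (Finset.mem_of_mem_erase hy) hxy
      have hx' : (x - a₀).toNat = m₁ := by omega
      have hy' : (y - a₀).toNat = m₂ := by omega
      have hsum : m₂ = m₁ + d := by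
        have : (m₂ : ℤ) = (m₁ : ℤ) + d := by omega
        exact_mod_cast this
      rw [hx', hy', hsum]
      have := ds_add hb m₁ d hD₁.2 hDd.2 (hsum ▸ hD₂.2)
      have := ds_pos (by omega : 2 ≤ b) (by omega : d ≠ 0)
      omega
    intro x hx y hy hxy
    by_contra hne'
    rcases lt_or_gt_of_ne hne' with h | h
    · exact absurd hxy (Nat.ne_of_lt (hmono x hx y hy h))
    · exact absurd hxy.symm (Nat.ne_of_lt (hmono y hy x hx h))
  have hmaps : ∀ a ∈ A.erase a₀, ds b (a - a₀).toNat ∈ Finset.Icc 1 L := by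
    intro a ha
    obtain ⟨m, he, hD, hm1, hmN⟩ := key a ha
    have : (a - a₀).toNat = m := by omega
    rw [this, Finset.mem_Icc]
    exact ⟨ds_pos (by omega) hD.1, ds_le_log (by omega) hD.1 hmN hD.2⟩
  have hcard : (A.erase a₀).card ≤ L := by
    have := Finset.card_le_card_of_injOn _ hmaps hinj
    simpa using this
  have : A.card = (A.erase a₀).card + 1 := by
    rw [Finset.card_erase_of_mem ha₀A]
    have := Finset.card_pos.mpr hne
    omega
  omega
end

section
/- Suppose f : ℕ → ℝ is positive and for every real γ there exists n ∈ D_b* with 1 ≤ n ≤ N and ‖γn‖ ≤ f(N). Then for every real γ there exists n ∈ D_b with 1 ≤ n ≤ N and ‖γn‖ ≤ (b−1)·f(N). -/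
/-- `n ∈ D_b* = D_b ∪ { b^d - b^c : d > c ≥ 0 }`. -/
def InDbStar (b n : ℕ) : Prop := InDb b n ∨ ∃ c d : ℕ, c < d ∧ n = b ^ d - b ^ c

lemma repunit_aux (b : ℕ) (hb : 2 ≤ b) (k : ℕ) :
    (b - 1) * Nat.ofDigits b (List.replicate k 1) + 1 = b ^ k := by
  induction k with
  | zero => simp [Nat.ofDigits]
  | succ k ih =>
    rw [List.replicate_succ, Nat.ofDigits_cons]
    have hz : ((b : ℤ) - 1) * (Nat.ofDigits b (List.replicate k 1) : ℤ) + 1 = (b : ℤ) ^ k := by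
      have := congrArg (fun x : ℕ => (x : ℤ)) ih
      push_cast at this
      rw [Nat.cast_sub (by omega)] at this
      push_cast at this
      linarith
    zify [show 1 ≤ b from by omega]
    ring_nf
    ring_nf at hz
    linear_combination (b : ℤ) * hz

lemma zero_pad (b c : ℕ) : Nat.ofDigits b (List.replicate c 0) = 0 := by
  induction c with
  | zero => simp [Nat.ofDigits]
  | succ c ih => rw [List.replicate_succ, Nat.ofDigits_cons, ih]; simp

lemma db_aux (b : ℕ) (hb : 2 ≤ b) (c k : ℕ) (hk : 1 ≤ k) :
    ∃ m : ℕ, m ≠ 0 ∧ (∀ d ∈ Nat.digits b m, d ≤ 1) ∧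
      (b - 1) * m = b ^ (c + k) - b ^ c := by
  have hne : List.replicate k (1 : ℕ) ≠ [] := by simp; omega
  have hdig : Nat.digits b (Nat.ofDigits b (List.replicate c 0 ++ List.replicate k 1)) =
      List.replicate c 0 ++ List.replicate k 1 := by
    apply Nat.digits_ofDigits b (by omega)
    · intro l hl
      rcases List.mem_append.1 hl with h' | h' <;>
        have := List.eq_of_mem_replicate h' <;> omega
    · intro h'
      rw [List.getLast_append_right hne]
      have hmem := List.getLast_mem hne
      have := List.eq_of_mem_replicate hmem
      omega
  refine ⟨Nat.ofDigits b (List.replicate c 0 ++ List.replicate k 1), ?_, ?_, ?_⟩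
  · intro h0
    have hempty : List.replicate c (0 : ℕ) ++ List.replicate k 1 = [] := by
      rw [← hdig, h0]; simp
    rw [List.append_eq_nil_iff] at hempty
    have := hempty.2
    simp at this
    omega
  · intro dd hdd
    rw [hdig] at hdd
    rcases List.mem_append.1 hdd with h' | h' <;>
      have := List.eq_of_mem_replicate h' <;> omega
  · have hmval : Nat.ofDigits b (List.replicate c 0 ++ List.replicate k 1) =
        b ^ c * Nat.ofDigits b (List.replicate k 1) := by
      rw [Nat.ofDigits_append, zero_pad]; simp
    have hrep := repunit_aux b hb k
    have hpow : b ^ c * b ^ k = b ^ (c + k) := by rw [← pow_add]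
    have hle : b ^ c ≤ b ^ (c + k) := Nat.pow_le_pow_right (by omega) (by omega)
    rw [hmval]
    zify [show 1 ≤ b from by omega, hle]
    have hrz : ((b : ℤ) - 1) * (Nat.ofDigits b (List.replicate k 1) : ℤ) = (b : ℤ) ^ k - 1 := by
      have := congrArg (fun x : ℕ => (x : ℤ)) hrep
      push_cast at this
      rw [Nat.cast_sub (by omega)] at this
      push_cast at this
      linarith
    have hpz : ((b : ℤ)) ^ c * (b : ℤ) ^ k = (b : ℤ) ^ (c + k) := by exact_mod_cast hpow
    linear_combination ((b : ℤ)) ^ c * hrz + hpz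

/-- Transfer of approximation quality from `D_b*` to `D_b`. -/
theorem approx_transfer (b : ℕ) (hb : 2 ≤ b) (N : ℕ) (f : ℕ → ℝ)
    (hf : ∀ n, 0 < f n)
    (h : ∀ γ : ℝ, ∃ n : ℕ, InDbStar b n ∧ 1 ≤ n ∧ n ≤ N ∧
      |γ * (n : ℝ) - round (γ * (n : ℝ))| ≤ f N) :
    ∀ γ : ℝ, ∃ n : ℕ, InDb b n ∧ 1 ≤ n ∧ n ≤ N ∧
      |γ * (n : ℝ) - round (γ * (n : ℝ))| ≤ ((b : ℝ) - 1) * f N := by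
  intro γ
  have hb1 : (1 : ℝ) ≤ (b : ℝ) - 1 := by
    have : (2 : ℝ) ≤ (b : ℝ) := by exact_mod_cast hb
    linarith
  have hbne : ((b : ℝ) - 1) ≠ 0 := by linarith
  obtain ⟨n, hstar, h1, hN, happ⟩ := h (γ / ((b : ℝ) - 1))
  rcases hstar with hdb | ⟨c, d, hcd, hn⟩
  · refine ⟨n, hdb, h1, hN, ?_⟩
    set x : ℝ := γ / ((b : ℝ) - 1) * n with hxdef
    have hx : γ * n = ((b : ℝ) - 1) * x := by
      rw [hxdef]; field_simp
    calc |γ * n - round (γ * n)|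
        ≤ |γ * n - ((((b : ℤ) - 1) * round x : ℤ) : ℝ)| := round_le _ _
      _ = ((b : ℝ) - 1) * |x - round x| := by
          rw [hx]
          push_cast
          rw [← mul_sub, abs_mul, abs_of_nonneg (by linarith : (0:ℝ) ≤ (b:ℝ) - 1)]
      _ ≤ ((b : ℝ) - 1) * f N := by
          apply mul_le_mul_of_nonneg_left happ (by linarith)
  · obtain ⟨m, hmne, hmdig, hkey⟩ := db_aux b hb c (d - c) (by omega)
    have hck : c + (d - c) = d := by omega
    rw [hck] at hkey
    have hmn : (b - 1) * m = n := by rw [hkey, hn]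
    have hmle : m ≤ n := by
      calc m ≤ (b - 1) * m := Nat.le_mul_of_pos_left m (by omega)
        _ = n := hmn
    have hm1 : 1 ≤ m := Nat.one_le_iff_ne_zero.2 hmne
    refine ⟨m, ⟨hmne, hmdig⟩, hm1, le_trans hmle hN, ?_⟩
    have hcast : (n : ℝ) = ((b : ℝ) - 1) * m := by
      rw [← hmn]
      push_cast [Nat.cast_sub (show 1 ≤ b by omega)]
      ring
    have heq : γ / ((b : ℝ) - 1) * n = γ * m := by
      rw [hcast]; field_simp
    rw [heq] at happ
    calc |γ * m - round (γ * m)| ≤ f N := happ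
      _ ≤ ((b : ℝ) - 1) * f N := by nlinarith [hf N]
end
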